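/- arXiv:math/0210075 — 4 statements merged into one kernel-verified Lean document; each statement's English description precedes it below -/
import Mathlib

section
/- Let F be a field, R = F[[s^3, s^4]], and let I, J be nonzero ideals of R with μ_R(I) = 3. Then μ_R(IJ) = 3, and hence IJ is integrally closed. -/
open Polynomial
set_option synthInstance.maxHeartbeats 1000000

/-- The content ideal of a polynomial: the ideal generated by its coefficients. -/
noncomputable def cont {R : Type*} [CommRing R] (p : R[X]) : Ideal R :=
  Ideal.span (Set.range p.coeff)

/-- The minimal number of generators of an ideal. -/
noncomputable def mug {R : Type*} [CommRing R] (I : Ideal R) : ℕ :=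
  sInf {n | ∃ x : Fin n → R, Ideal.span (Set.range x) = I}

/-- The Dedekind--Mertens number of a polynomial. -/
noncomputable def dmNumber (R : Type*) [CommRing R] (g : R[X]) : ℕ :=
  sInf {k | 0 < k ∧ ∀ f : R[X], cont (f * g) * cont f ^ (k - 1) = cont f ^ k * cont g}

/-- The polarized Dedekind--Mertens number of a polynomial. -/
noncomputable def polDmNumber (R : Type*) [CommRing R] (g : R[X]) : ℕ :=
  sInf {k | 0 < k ∧ ∀ f : Fin k → R[X],
    (∑ i, cont (f i * g) * ∏ j ∈ Finset.univ.erase i, cont (f j)) =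
      (∏ i, cont (f i)) * cont g}

/-- `x` is in the integral closure of the ideal `I`. -/
def memIntCl {R : Type*} [CommRing R] (I : Ideal R) (x : R) : Prop :=
  ∃ k : ℕ, 0 < k ∧ ∃ a : ℕ → R, (∀ i, 1 ≤ i → i ≤ k → a i ∈ I ^ i) ∧
    x ^ k + ∑ i ∈ Finset.Icc 1 k, a i * x ^ (k - i) = 0

namespace S3S4

open PowerSeries

set_option maxHeartbeats 1000000



variable {F : Type*} [Field F]

/-- all coefficients below `k` vanish -/
def vge (f : PowerSeries F) (k : ℕ) : Prop := ∀ m, m < k → coeff (R := F) m f = 0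

lemma vge_of_le {f : PowerSeries F} {k j : ℕ} (h : vge f k) (hj : j ≤ k) : vge f j :=
  fun m hm => h m (lt_of_lt_of_le hm hj)

lemma vge_zero (k : ℕ) : vge (0 : PowerSeries F) k := fun m _ => map_zero _

lemma vge_sub {f g : PowerSeries F} {k} (hf : vge f k) (hg : vge g k) : vge (f - g) k :=
  fun m hm => by rw [map_sub, hf m hm, hg m hm, sub_zero]

lemma vge_add {f g : PowerSeries F} {k} (hf : vge f k) (hg : vge g k) : vge (f + g) k :=
  fun m hm => by rw [map_add, hf m hm, hg m hm, add_zero]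

lemma vge_mul {f g : PowerSeries F} {a b} (hf : vge f a) (hg : vge g b) :
    vge (f * g) (a + b) := by
  intro m hm
  rw [PowerSeries.coeff_mul]
  refine Finset.sum_eq_zero fun p hp => ?_
  rw [Finset.HasAntidiagonal.mem_antidiagonal] at hp
  rcases lt_or_ge p.1 a with h | h
  · rw [hf p.1 h, zero_mul]
  · rw [hg p.2 (by omega), mul_zero]

lemma vge_mul_left {f g : PowerSeries F} {b} (hg : vge g b) : vge (f * g) b := by
  have := vge_mul (f := f) (a := 0) (fun m hm => absurd hm (Nat.not_lt_zero m)) hg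
  simpa using this

lemma exists_order {f : PowerSeries F} (hf : f ≠ 0) :
    ∃ m, vge f m ∧ coeff (R := F) m f ≠ 0 := by
  have hne : {k | coeff (R := F) k f ≠ 0}.Nonempty := by
    by_contra hc
    apply hf
    ext n
    simp only [Set.not_nonempty_iff_eq_empty, Set.eq_empty_iff_forall_notMem,
      Set.mem_setOf_eq, not_not] at hc
    simpa using hc n
  refine ⟨sInf {k | coeff (R := F) k f ≠ 0}, ?_, Nat.sInf_mem hne⟩
  intro m hm
  by_contra hc
  have := Nat.sInf_le (show m ∈ {k | coeff (R := F) k f ≠ 0} from hc)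
  omega

lemma div_vge {r g : PowerSeries F} {d k : ℕ} (hg : vge g d) (hgd : coeff (R := F) d g ≠ 0)
    (h : vge (r * g) k) : ∀ a, a + d < k → coeff (R := F) a r = 0 := by
  intro a
  induction a using Nat.strong_induction_on with
  | _ a ih =>
    intro ha
    have h0 : coeff (R := F) (a + d) (r * g) = 0 := h (a + d) ha
    rw [PowerSeries.coeff_mul] at h0
    rw [Finset.sum_eq_single (a, d)] at h0
    · rcases mul_eq_zero.1 h0 with h' | h'
      · exact h'
      · exact absurd h' hgd
    · rintro ⟨x, y⟩ hxy hne
      rw [Finset.HasAntidiagonal.mem_antidiagonal] at hxy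
      rcases lt_trichotomy x a with hx | hx | hx
      · rw [ih x hx (by omega), zero_mul]
      · exact absurd (by simp [hx]; omega) hne
      · rw [hg y (by omega), mul_zero]
    · intro hmem
      exact absurd (by simp : (a, d) ∈ Finset.HasAntidiagonal.antidiagonal (a + d)) hmem

lemma vge_Xpow (e : ℕ) : vge ((X : PowerSeries F) ^ e) e := by
  intro a ha
  rw [PowerSeries.coeff_X_pow, if_neg (by omega)]

lemma vge_mul_right {f g : PowerSeries F} {a} (hf : vge f a) : vge (f * g) a := by
  have := vge_mul (g := g) (b := 0) hf (fun m hm => absurd hm (Nat.not_lt_zero m))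
  simpa using this

section Ring

variable (R : Subring (PowerSeries F))

def KI (N : ℕ) : Ideal ↥R where
  carrier := {x | vge (x : PowerSeries F) N}
  add_mem' := by
    intro a b ha hb
    have := vge_add ha hb
    simpa using this
  zero_mem' := by simpa using vge_zero (F := F) N
  smul_mem' := by
    intro c x hx
    have := vge_mul_left (f := (c : PowerSeries F)) hx
    simpa using this

lemma mem_KI {N : ℕ} {x : ↥R} : x ∈ KI R N ↔ vge (x : PowerSeries F) N := Iff.rfl

lemma minorder (I : Ideal ↥R) (hI : I ≠ ⊥) :
    ∃ n, (∀ x ∈ I, vge (x : PowerSeries F) n) ∧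
      ∃ g, g ∈ I ∧ vge (g : PowerSeries F) n ∧ coeff (R := F) n (g : PowerSeries F) ≠ 0 := by
  obtain ⟨x0, hx0I, hx0⟩ := Submodule.exists_mem_ne_zero_of_ne_bot hI
  have hx0' : (x0 : PowerSeries F) ≠ 0 := fun hc => hx0 (Subtype.ext hc)
  set nset : Set ℕ := {k | ∃ x : ↥R, x ∈ I ∧ coeff (R := F) k (x : PowerSeries F) ≠ 0} with hnset
  have hne : nset.Nonempty := by
    obtain ⟨k, -, hk⟩ := exists_order hx0'
    exact ⟨k, x0, hx0I, hk⟩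
  obtain ⟨g, hgI, hgc⟩ := Nat.sInf_mem hne
  refine ⟨sInf nset, ?_, g, hgI, ?_, hgc⟩
  · intro x hx mm hmm
    by_contra hc
    have := Nat.sInf_le (show mm ∈ nset from ⟨x, hx, hc⟩)
    omega
  · intro mm hmm
    by_contra hc
    have := Nat.sInf_le (show mm ∈ nset from ⟨g, hgI, hc⟩)
    omega

variable (hR : ∀ f : PowerSeries F, f ∈ R ↔
      PowerSeries.coeff (R := F) 1 f = 0 ∧ PowerSeries.coeff (R := F) 2 f = 0 ∧ PowerSeries.coeff (R := F) 5 f = 0)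
include hR

lemma CXpow_mem (c : F) {e : ℕ} (h1 : e ≠ 1) (h2 : e ≠ 2) (h5 : e ≠ 5) :
    (PowerSeries.C (R := F) c * PowerSeries.X ^ e : PowerSeries F) ∈ R := by
  rw [hR]
  refine ⟨?_, ?_, ?_⟩ <;>
    · rw [PowerSeries.coeff_C_mul, PowerSeries.coeff_X_pow]
      rw [if_neg (by omega)]
      ring

lemma Xpow_mem {e : ℕ} (h1 : e ≠ 1) (h2 : e ≠ 2) (h5 : e ≠ 5) :
    ((PowerSeries.X : PowerSeries F) ^ e) ∈ R := by
  have := CXpow_mem R hR (1 : F) h1 h2 h5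
  rwa [map_one, one_mul] at this

lemma index_ok {x : ↥R} {m : ℕ} (h : coeff (R := F) m (x : PowerSeries F) ≠ 0) :
    m ≠ 1 ∧ m ≠ 2 ∧ m ≠ 5 := by
  obtain ⟨h1, h2, h5⟩ := (hR _).1 x.2
  refine ⟨?_, ?_, ?_⟩ <;> rintro rfl <;> [exact h h1; exact h h2; exact h h5]

omit hR in
lemma vge_CX (c : F) (e : ℕ) : vge (PowerSeries.C (R := F) c * PowerSeries.X ^ e : PowerSeries F) e := by
  intro m hm
  rw [PowerSeries.coeff_C_mul, PowerSeries.coeff_X_pow, if_neg (by omega), mul_zero]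

/-- one reduction step: kill the lowest coefficient of `h` using generator `g i` -/
lemma red_mono {t : ℕ} (g : Fin t → ↥R) (d : Fin t → ℕ)
    (hd1 : ∀ i, vge ((g i : ↥R) : PowerSeries F) (d i))
    (hd2 : ∀ i, coeff (R := F) (d i) ((g i : ↥R) : PowerSeries F) ≠ 0)
    (h : ↥R) (m : ℕ) (hv : vge (h : PowerSeries F) m)
    (i : Fin t) (e : ℕ) (hme : m = d i + e) (he1 : e ≠ 1) (he2 : e ≠ 2) (he5 : e ≠ 5) :
    ∃ r : ↥R, vge ((h - r * g i : ↥R) : PowerSeries F) (m + 1) := by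
  set c : F := coeff (R := F) m (h : PowerSeries F) / coeff (R := F) (d i) ((g i : ↥R) : PowerSeries F) with hc
  refine ⟨⟨PowerSeries.C (R := F) c * PowerSeries.X ^ e, CXpow_mem R hR c he1 he2 he5⟩, ?_⟩
  have hprod : ((⟨PowerSeries.C (R := F) c * PowerSeries.X ^ e, CXpow_mem R hR c he1 he2 he5⟩ * g i : ↥R) : PowerSeries F)
      = (PowerSeries.C (R := F) c * PowerSeries.X ^ e) * ((g i : ↥R) : PowerSeries F) := rfl
  intro a ha
  have hcoe : ((h - ⟨PowerSeries.C (R := F) c * PowerSeries.X ^ e, CXpow_mem R hR c he1 he2 he5⟩ * g i : ↥R) : PowerSeries F)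
      = (h : PowerSeries F) - (PowerSeries.C (R := F) c * PowerSeries.X ^ e) * ((g i : ↥R) : PowerSeries F) := rfl
  rw [hcoe, map_sub]
  rcases lt_or_ge a m with ham | ham
  · rw [hv a ham]
    have : vge ((PowerSeries.C (R := F) c * PowerSeries.X ^ e) * ((g i : ↥R) : PowerSeries F)) (e + d i) :=
      vge_mul (vge_CX c e) (hd1 i)
    rw [this a (by omega), sub_zero]
  · have ha' : a = m := by omega
    subst ha'
    rw [mul_assoc, PowerSeries.coeff_C_mul, hc, hme, PowerSeries.coeff_X_pow_mul,
      div_mul_cancel₀ _ (hd2 i), sub_self]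

/-- The generation lemma: successive approximation. -/
lemma genLem (I : Ideal ↥R) (n : ℕ) (hAll : ∀ x ∈ I, vge (x : PowerSeries F) n)
    {t : ℕ} (g : Fin t → ↥R) (hg : ∀ i, g i ∈ I)
    (d : Fin t → ℕ) (hd1 : ∀ i, vge ((g i : ↥R) : PowerSeries F) (d i))
    (hd2 : ∀ i, coeff (R := F) (d i) ((g i : ↥R) : PowerSeries F) ≠ 0)
    (red : ∀ h : ↥R, h ∈ I → ∀ m, vge (h : PowerSeries F) m →
      coeff (R := F) m (h : PowerSeries F) ≠ 0 →
      ∃ i : Fin t, ∃ r : ↥R, vge ((h - r * g i : ↥R) : PowerSeries F) (m + 1)) :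
    Ideal.span (Set.range g) = I := by
  classical
  apply le_antisymm
  · rw [Ideal.span_le]
    rintro _ ⟨i, rfl⟩
    exact hg i
  intro h hh
  rcases Nat.eq_zero_or_pos t with ht | ht
  · subst ht
    have hz : h = 0 := by
      by_contra hne
      have hne' : (h : PowerSeries F) ≠ 0 := fun hc => hne (Subtype.ext hc)
      obtain ⟨m, hv, hc⟩ := exists_order hne'
      obtain ⟨i, -⟩ := red h hh m hv hc
      exact i.elim0
    rw [hz]
    exact zero_mem _
  have hstep : ∀ p : {x : ↥R // x ∈ I}, ∃ (i : Fin t) (r : ↥R),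
      ((p : ↥R) - r * g i) ∈ I ∧
      (∀ m, vge ((p : ↥R) : PowerSeries F) m →
        vge (((p : ↥R) - r * g i : ↥R) : PowerSeries F) (m + 1)) := by
    rintro ⟨x, hx⟩
    by_cases hz : (x : PowerSeries F) = 0
    · refine ⟨⟨0, ht⟩, 0, by simpa using hx, ?_⟩
      intro m _ a _
      have : ((x - 0 * g ⟨0, ht⟩ : ↥R) : PowerSeries F) = (x : PowerSeries F) := by
        push_cast; ring
      rw [this, hz, map_zero]
    · obtain ⟨m0, hv0, hc0⟩ := exists_order hz
      obtain ⟨i, r, hir⟩ := red x hx m0 hv0 hc0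
      refine ⟨i, r, I.sub_mem hx (I.mul_mem_left r (hg i)), ?_⟩
      intro m hm
      have hmm : m ≤ m0 := by
        by_contra hlt
        exact hc0 (hm m0 (by omega))
      exact vge_of_le hir (by omega)
  choose pi pr hmem hvge using hstep
  set seq : ℕ → {x : ↥R // x ∈ I} :=
    fun j => Nat.rec ⟨h, hh⟩ (fun _ p => ⟨(p : ↥R) - pr p * g (pi p), hmem p⟩) j with hseq
  have seq_succ : ∀ j, ((seq (j+1) : ↥R)) = (seq j : ↥R) - pr (seq j) * g (pi (seq j)) :=
    fun j => rfl
  have hv : ∀ j, vge ((seq j : ↥R) : PowerSeries F) (n + j) := by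
    intro j
    induction j with
    | zero => simpa using (show vge ((seq 0 : ↥R) : PowerSeries F) (n + 0) from hAll h hh)
    | succ j ih =>
      have h2 := hvge (seq j) (n + j) ih
      rw [← seq_succ] at h2
      have : n + (j + 1) = (n + j) + 1 := by omega
      rw [this]
      exact h2
  have hrg : ∀ j, ((pr (seq j) * g (pi (seq j)) : ↥R) : PowerSeries F)
      = ((seq j : ↥R) : PowerSeries F) - ((seq (j+1) : ↥R) : PowerSeries F) := by
    intro j
    rw [seq_succ j]
    push_cast
    ring
  have hvrg : ∀ j, vge (((pr (seq j) : ↥R) : PowerSeries F)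
      * ((g (pi (seq j)) : ↥R) : PowerSeries F)) (n + j) := by
    intro j
    have h1 : ((pr (seq j) : ↥R) : PowerSeries F) * ((g (pi (seq j)) : ↥R) : PowerSeries F)
        = ((pr (seq j) * g (pi (seq j)) : ↥R) : PowerSeries F) := by push_cast; ring
    rw [h1, hrg j]
    exact vge_sub (hv j) (vge_of_le (hv (j+1)) (by omega))
  have hdecay : ∀ j a, a + d (pi (seq j)) < n + j →
      coeff (R := F) a ((pr (seq j) : ↥R) : PowerSeries F) = 0 := by
    intro j a ha
    exact div_vge (hd1 _) (hd2 _) (hvrg j) a ha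
  set D : ℕ := Finset.univ.sup d with hD
  have hDle : ∀ i, d i ≤ D := fun i => Finset.le_sup (Finset.mem_univ i)
  have hvanish : ∀ j a, a + D < j →
      coeff (R := F) a ((pr (seq j) : ↥R) : PowerSeries F) = 0 := by
    intro j a ha
    exact hdecay j a (by have := hDle (pi (seq j)); omega)
  set T : Fin t → PowerSeries F := fun i => PowerSeries.mk (fun a =>
    ∑ j ∈ Finset.range (a + D + 1),
      if pi (seq j) = i then coeff (R := F) a ((pr (seq j) : ↥R) : PowerSeries F) else 0) with hT
  have hTmem : ∀ i, T i ∈ R := by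
    intro i
    rw [hR]
    refine ⟨?_, ?_, ?_⟩ <;>
      · rw [hT]
        simp only [PowerSeries.coeff_mk]
        refine Finset.sum_eq_zero fun j _ => ?_
        split
        · obtain ⟨c1, c2, c5⟩ := (hR _).1 (pr (seq j)).2
          first | exact c1 | exact c2 | exact c5
        · rfl
  have hText : ∀ i a M, a + D + 1 ≤ M → coeff (R := F) a (T i)
      = ∑ j ∈ Finset.range M,
        (if pi (seq j) = i then coeff (R := F) a ((pr (seq j) : ↥R) : PowerSeries F) else 0) := by
    intro i a M hM
    rw [hT]
    simp only [PowerSeries.coeff_mk]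
    apply Finset.sum_subset (Finset.range_subset_range.2 hM)
    intro j _ hj
    rw [Finset.mem_range, not_lt] at hj
    split
    · exact hvanish j a (by omega)
    · rfl
  have hrep : h = ∑ i, (⟨T i, hTmem i⟩ : ↥R) * g i := by
    apply Subtype.ext
    apply PowerSeries.ext
    intro m
    have hcoe : ((∑ i, (⟨T i, hTmem i⟩ : ↥R) * g i : ↥R) : PowerSeries F)
        = ∑ i, T i * ((g i : ↥R) : PowerSeries F) := by
      push_cast
      rfl
    rw [hcoe, map_sum]
    set M : ℕ := m + D + 1 with hM
    have step1 : ∀ i, coeff (R := F) m (T i * ((g i : ↥R) : PowerSeries F))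
        = ∑ j ∈ Finset.range M, (if pi (seq j) = i then
            coeff (R := F) m (((pr (seq j) : ↥R) : PowerSeries F) * ((g i : ↥R) : PowerSeries F))
          else 0) := by
      intro i
      rw [PowerSeries.coeff_mul]
      have hterm : ∀ p ∈ Finset.HasAntidiagonal.antidiagonal m,
          coeff (R := F) p.1 (T i) * coeff (R := F) p.2 ((g i : ↥R) : PowerSeries F)
          = ∑ j ∈ Finset.range M, (if pi (seq j) = i then
              coeff (R := F) p.1 ((pr (seq j) : ↥R) : PowerSeries F)
                * coeff (R := F) p.2 ((g i : ↥R) : PowerSeries F) else 0) := by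
        intro p hp
        rw [Finset.HasAntidiagonal.mem_antidiagonal] at hp
        rw [hText i p.1 M (by omega), Finset.sum_mul]
        refine Finset.sum_congr rfl fun j _ => ?_
        split
        · rfl
        · rw [zero_mul]
      rw [Finset.sum_congr rfl hterm, Finset.sum_comm]
      refine Finset.sum_congr rfl fun j _ => ?_
      split
      · rw [PowerSeries.coeff_mul]
      · exact Finset.sum_const_zero
    rw [Finset.sum_congr rfl fun i _ => step1 i, Finset.sum_comm]
    have step2 : ∀ j, (∑ i, if pi (seq j) = i then
        coeff (R := F) m (((pr (seq j) : ↥R) : PowerSeries F) * ((g i : ↥R) : PowerSeries F)) else 0)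
        = coeff (R := F) m (((pr (seq j) : ↥R) : PowerSeries F)
            * ((g (pi (seq j)) : ↥R) : PowerSeries F)) := by
      intro j
      rw [Finset.sum_ite_eq]
      simp
    rw [Finset.sum_congr rfl fun j _ => step2 j]
    have step3 : ∀ j, coeff (R := F) m (((pr (seq j) : ↥R) : PowerSeries F)
        * ((g (pi (seq j)) : ↥R) : PowerSeries F))
        = coeff (R := F) m ((seq j : ↥R) : PowerSeries F)
          - coeff (R := F) m ((seq (j+1) : ↥R) : PowerSeries F) := by
      intro j
      have h1 : ((pr (seq j) : ↥R) : PowerSeries F) * ((g (pi (seq j)) : ↥R) : PowerSeries F)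
          = ((pr (seq j) * g (pi (seq j)) : ↥R) : PowerSeries F) := by push_cast; ring
      rw [h1, hrg j, map_sub]
    rw [Finset.sum_congr rfl fun j _ => step3 j]
    rw [Finset.sum_range_sub' (fun j => coeff (R := F) m ((seq j : ↥R) : PowerSeries F)) M]
    have hlast : coeff (R := F) m ((seq M : ↥R) : PowerSeries F) = 0 := hv M m (by omega)
    rw [hlast, sub_zero]
    rfl
  rw [hrep]
  exact Ideal.sum_mem _ fun i _ =>
    Ideal.mul_mem_left _ _ (Ideal.subset_span ⟨i, rfl⟩)

/-- spanning by three generators of consecutive orders N, N+1, N+2 -/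
lemma span_consec (N : ℕ) (I : Ideal ↥R) (hAll : ∀ x ∈ I, vge (x : PowerSeries F) N)
    (g : Fin 3 → ↥R) (hg : ∀ i, g i ∈ I)
    (hd1 : ∀ i : Fin 3, vge ((g i : ↥R) : PowerSeries F) (N + ↑i))
    (hd2 : ∀ i : Fin 3, coeff (R := F) (N + ↑i) ((g i : ↥R) : PowerSeries F) ≠ 0) :
    Ideal.span (Set.range g) = I := by
  refine genLem R hR I N hAll g hg (fun i : Fin 3 => N + (i : ℕ)) hd1 hd2 ?_
  intro h hh m hv hc
  have hNm : N ≤ m := by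
    by_contra hlt
    exact hc (hAll h hh m (by omega))
  have hl3 : (m - N) % 3 < 3 := Nat.mod_lt _ (by omega)
  refine ⟨⟨(m - N) % 3, hl3⟩, red_mono R hR g (fun i : Fin 3 => N + (i : ℕ)) hd1 hd2 h m hv _
    (m - N - (m - N) % 3) ?_ (by omega) (by omega) (by omega)⟩
  show m = N + (m - N) % 3 + (m - N - (m - N) % 3)
  omega

lemma coeff_comb {N k : ℕ} (x : Fin k → ↥R) (hx : ∀ i, vge ((x i : ↥R) : PowerSeries F) N)
    (c : Fin k → ↥R) {j : ℕ} (hj : j < 3) :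
    coeff (R := F) (N + j) (((∑ i, c i • x i : ↥R)) : PowerSeries F)
      = ∑ i, coeff (R := F) 0 ((c i : ↥R) : PowerSeries F) * coeff (R := F) (N + j) ((x i : ↥R) : PowerSeries F) := by
  have hcoe : (((∑ i, c i • x i : ↥R)) : PowerSeries F)
      = ∑ i, ((c i : ↥R) : PowerSeries F) * ((x i : ↥R) : PowerSeries F) := by
    rw [show ((∑ i, c i • x i : ↥R)) = ∑ i, c i * x i from by
      refine Finset.sum_congr rfl fun i _ => ?_
      rw [smul_eq_mul]]
    push_cast
    rfl
  rw [hcoe, map_sum]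
  refine Finset.sum_congr rfl fun i _ => ?_
  rw [PowerSeries.coeff_mul]
  rw [Finset.sum_eq_single ((0 : ℕ), N + j)]
  · rintro ⟨p1, p2⟩ hp hne
    rw [Finset.HasAntidiagonal.mem_antidiagonal] at hp
    rcases Nat.lt_or_ge p1 3 with hp1 | hp1
    · interval_cases p1
      · exact absurd (by simp; omega) hne
      · obtain ⟨h1, -, -⟩ := (hR _).1 (c i).2
        rw [h1, zero_mul]
      · obtain ⟨-, h2, -⟩ := (hR _).1 (c i).2
        rw [h2, zero_mul]
    · rw [hx i p2 (by omega), mul_zero]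
  · intro hmem
    exact absurd (by simp : ((0 : ℕ), N + j) ∈ Finset.HasAntidiagonal.antidiagonal (0 + (N + j))) (by simpa using hmem)

lemma three_le (N : ℕ) (hN : 6 ≤ N) {k : ℕ} (x : Fin k → ↥R)
    (hx : Ideal.span (Set.range x) = KI R N) : 3 ≤ k := by
  classical
  have hvi : ∀ i, vge ((x i : ↥R) : PowerSeries F) N := by
    intro i
    have : x i ∈ KI R N := by
      rw [← hx]
      exact Ideal.subset_span ⟨i, rfl⟩
    exact this
  set w : Fin k → (Fin 3 → F) := fun i j => coeff (R := F) (N + (j : ℕ)) ((x i : ↥R) : PowerSeries F)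
    with hw
  have hsingle : ∀ j : Fin 3, (Pi.single j (1 : F) : Fin 3 → F)
      ∈ Submodule.span F (Set.range w) := by
    intro j
    have hXm : ((X : PowerSeries F) ^ (N + (j : ℕ))) ∈ R :=
      Xpow_mem R hR (by omega) (by omega) (by omega)
    have hXKI : (⟨(X : PowerSeries F) ^ (N + (j : ℕ)), hXm⟩ : ↥R) ∈ KI R N := by
      intro a ha
      exact vge_Xpow (N + (j : ℕ)) a (by omega)
    rw [← hx] at hXKI
    obtain ⟨c, hc⟩ := (Submodule.mem_span_range_iff_exists_fun ↥R).1 hXKI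
    have hkey : (Pi.single j (1 : F) : Fin 3 → F)
        = ∑ i, coeff (R := F) 0 ((c i : ↥R) : PowerSeries F) • w i := by
      funext j'
      have h1 : coeff (R := F) (N + (j' : ℕ)) (((∑ i, c i • x i : ↥R)) : PowerSeries F)
          = ∑ i, coeff (R := F) 0 ((c i : ↥R) : PowerSeries F)
              * coeff (R := F) (N + (j' : ℕ)) ((x i : ↥R) : PowerSeries F) :=
        coeff_comb R hR x hvi c j'.isLt
      rw [hc] at h1
      have h2 : coeff (R := F) (N + (j' : ℕ))
          (((⟨(X : PowerSeries F) ^ (N + (j : ℕ)), hXm⟩ : ↥R)) : PowerSeries F)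
          = if j' = j then 1 else 0 := by
        rw [show (((⟨(X : PowerSeries F) ^ (N + (j : ℕ)), hXm⟩ : ↥R)) : PowerSeries F)
          = (X : PowerSeries F) ^ (N + (j : ℕ)) from rfl]
        rw [PowerSeries.coeff_X_pow]
        by_cases hjj : j' = j
        · rw [if_pos (by rw [hjj]), if_pos hjj]
        · rw [if_neg (fun huv => hjj (by
            have : (j' : ℕ) = (j : ℕ) := by omega
            exact Fin.ext this)), if_neg hjj]
      rw [h2] at h1
      rw [Pi.single_apply]
      rw [h1]
      rw [Finset.sum_apply]
      refine Finset.sum_congr rfl fun i _ => ?_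
      rw [Pi.smul_apply, smul_eq_mul]
    rw [hkey]
    exact Submodule.sum_mem _ fun i _ =>
      Submodule.smul_mem _ _ (Submodule.subset_span ⟨i, rfl⟩)
  have hspan_top : Submodule.span F (Set.range w) = ⊤ := by
    rw [eq_top_iff]
    intro v _
    have hv : v = ∑ j : Fin 3, v j • (Pi.single j (1 : F) : Fin 3 → F) := by
      funext j'
      rw [Finset.sum_apply]
      rw [Finset.sum_eq_single j']
      · rw [Pi.smul_apply, Pi.single_eq_same, smul_eq_mul, mul_one]
      · intro b _ hb
        rw [Pi.smul_apply, Pi.single_eq_of_ne (fun h => hb h.symm) , smul_zero]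
      · intro h
        exact absurd (Finset.mem_univ j') h
    rw [hv]
    exact Submodule.sum_mem _ fun j _ => Submodule.smul_mem _ _ (hsingle j)
  have hrank : Module.finrank F (Fin 3 → F) ≤ k := by
    have h1 : LinearMap.range (Fintype.linearCombination F w) = Submodule.span F (Set.range w) :=
      Fintype.range_linearCombination F w
    have h2 : Module.finrank F ↥(LinearMap.range (Fintype.linearCombination F w))
        ≤ Module.finrank F (Fin k → F) :=
      LinearMap.finrank_range_le _
    rw [h1, hspan_top] at h2
    rw [finrank_top] at h2
    calc Module.finrank F (Fin 3 → F) ≤ Module.finrank F (Fin k → F) := h2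
    _ = k := by rw [Module.finrank_pi]; exact Fintype.card_fin k
  rw [Module.finrank_pi, Fintype.card_fin] at hrank
  exact hrank

lemma span_KI (N : ℕ) (hN : 6 ≤ N) :
    ∃ g : Fin 3 → ↥R, Ideal.span (Set.range g) = KI R N := by
  refine ⟨fun i => ⟨(X : PowerSeries F) ^ (N + (i : ℕ)),
    Xpow_mem R hR (by have := i.isLt; omega) (by have := i.isLt; omega)
      (by have := i.isLt; omega)⟩, ?_⟩
  refine span_consec R hR N (KI R N) (fun x hx => hx) _ ?_ ?_ ?_
  · intro i a ha
    exact vge_Xpow (N + (i : ℕ)) a (by omega)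
  · intro i
    exact vge_Xpow (N + (i : ℕ))
  · intro i
    rw [show ((((⟨(X : PowerSeries F) ^ (N + (i : ℕ)), by
      exact Xpow_mem R hR (by have := i.isLt; omega) (by have := i.isLt; omega)
        (by have := i.isLt; omega)⟩ : ↥R))) : PowerSeries F)
      = (X : PowerSeries F) ^ (N + (i : ℕ)) from rfl]
    rw [PowerSeries.coeff_X_pow, if_pos rfl]
    exact one_ne_zero

lemma mug_KI (N : ℕ) (hN : 6 ≤ N) : mug (KI R N) = 3 := by
  obtain ⟨g, hg⟩ := span_KI R hR N hN
  unfold mug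
  apply le_antisymm
  · exact Nat.sInf_le ⟨g, hg⟩
  · refine le_csInf ⟨3, g, hg⟩ ?_
    rintro b ⟨x, hx⟩
    exact three_le R hR N hN x hx

lemma key (I : Ideal ↥R) (hI : I ≠ ⊥)
    (hno2 : ∀ k, (∃ x : Fin k → ↥R, Ideal.span (Set.range x) = I) → 3 ≤ k) :
    ∃ n, 6 ≤ n ∧ I = KI R n := by
  classical
  obtain ⟨n, hAll, g0, hg0I, hg0v, hg0c⟩ := minorder R I hI
  have horder : ∀ h : ↥R, h ∈ I → ∀ m, coeff (R := F) m (h : PowerSeries F) ≠ 0 → n ≤ m := by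
    intro h hh m hc
    by_contra hlt
    exact hc (hAll h hh m (by omega))
  by_cases hP1 : ∃ x : ↥R, x ∈ I ∧ vge (x : PowerSeries F) (n+1)
      ∧ coeff (R := F) (n+1) (x : PowerSeries F) ≠ 0
  · by_cases hP2 : ∃ x : ↥R, x ∈ I ∧ vge (x : PowerSeries F) (n+2)
        ∧ coeff (R := F) (n+2) (x : PowerSeries F) ≠ 0
    · -- the ideal is s^n F[[s]]
      obtain ⟨g1, hg1I, hg1v, hg1c⟩ := hP1
      obtain ⟨g2, hg2I, hg2v, hg2c⟩ := hP2
      have hn6 : 6 ≤ n := by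
        obtain ⟨a1, a2, a5⟩ := index_ok R hR hg0c
        obtain ⟨b1, b2, b5⟩ := index_ok R hR hg1c
        obtain ⟨c1, c2, c5⟩ := index_ok R hR hg2c
        omega
      refine ⟨n, hn6, ?_⟩
      set g : Fin 3 → ↥R := ![g0, g1, g2] with hg
      have hd1 : ∀ i : Fin 3, vge ((g i : ↥R) : PowerSeries F) (n + (i : ℕ)) := by
        intro i
        fin_cases i
        · exact hg0v
        · exact hg1v
        · exact hg2v
      have hd2 : ∀ i : Fin 3, coeff (R := F) (n + (i : ℕ)) ((g i : ↥R) : PowerSeries F) ≠ 0 := by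
        intro i
        fin_cases i
        · exact hg0c
        · exact hg1c
        · exact hg2c
      have hmem : ∀ i : Fin 3, g i ∈ KI R n := by
        intro i
        fin_cases i
        · exact hg0v
        · exact vge_of_le hg1v (by omega)
        · exact vge_of_le hg2v (by omega)
      have hspan := span_consec R hR n (KI R n) (fun x hx => hx) g hmem hd1 hd2
      apply le_antisymm
      · intro x hx
        exact hAll x hx
      · intro x hx
        rw [← hspan] at hx
        refine Ideal.span_le.2 ?_ hx
        rintro _ ⟨i, rfl⟩
        fin_cases i
        · exact hg0I
        · exact hg1I
        · exact hg2I
    · -- two generators of orders n, n+1 : contradiction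
      exfalso
      obtain ⟨g1, hg1I, hg1v, hg1c⟩ := hP1
      have hnP2 : ∀ h : ↥R, h ∈ I → ∀ m, vge (h : PowerSeries F) m →
          coeff (R := F) m (h : PowerSeries F) ≠ 0 → m ≠ n + 2 := by
        rintro h hh m hv hc rfl
        exact hP2 ⟨h, hh, hv, hc⟩
      set g : Fin 2 → ↥R := ![g0, g1] with hg
      have hd1 : ∀ i : Fin 2, vge ((g i : ↥R) : PowerSeries F) (n + (i : ℕ)) := by
        intro i; fin_cases i
        · exact hg0v
        · exact hg1v
      have hd2 : ∀ i : Fin 2, coeff (R := F) (n + (i : ℕ)) ((g i : ↥R) : PowerSeries F) ≠ 0 := by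
        intro i; fin_cases i
        · exact hg0c
        · exact hg1c
      have hspan := genLem R hR I n hAll g
        (by intro i; fin_cases i; exacts [hg0I, hg1I])
        (fun i => n + (i : ℕ)) hd1 hd2 ?_
      · exact absurd (hno2 2 ⟨g, hspan⟩) (by omega)
      intro h hh m hv hc
      have hnm := horder h hh m hc
      have hm2 := hnP2 h hh m hv hc
      rcases (show (m - n) % 3 = 0 ∨ (m - n) % 3 = 1 ∨ (m - n) % 3 = 2 by omega) with hmod | hmod | hmod
      · exact ⟨0, red_mono R hR g _ hd1 hd2 h m hv 0 (m - n)
          (by show m = n + (0 : ℕ) + (m - n); omega) (by omega) (by omega) (by omega)⟩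
      · exact ⟨1, red_mono R hR g _ hd1 hd2 h m hv 1 (m - n - 1)
          (by show m = n + (1 : ℕ) + (m - n - 1); omega) (by omega) (by omega) (by omega)⟩
      · exact ⟨1, red_mono R hR g _ hd1 hd2 h m hv 1 (m - n - 1)
          (by show m = n + (1 : ℕ) + (m - n - 1); omega) (by omega) (by omega) (by omega)⟩
  · have hnP1 : ∀ h : ↥R, h ∈ I → ∀ m, vge (h : PowerSeries F) m →
        coeff (R := F) m (h : PowerSeries F) ≠ 0 → m ≠ n + 1 := by
      rintro h hh m hv hc rfl
      exact hP1 ⟨h, hh, hv, hc⟩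
    by_cases hP2 : ∃ x : ↥R, x ∈ I ∧ vge (x : PowerSeries F) (n+2)
        ∧ coeff (R := F) (n+2) (x : PowerSeries F) ≠ 0
    · -- two generators of orders n, n+2 : contradiction
      exfalso
      obtain ⟨g2, hg2I, hg2v, hg2c⟩ := hP2
      set g : Fin 2 → ↥R := ![g0, g2] with hg
      have hd1 : ∀ i : Fin 2, vge ((g i : ↥R) : PowerSeries F) (n + 2 * (i : ℕ)) := by
        intro i; fin_cases i
        · exact hg0v
        · exact hg2v
      have hd2 : ∀ i : Fin 2, coeff (R := F) (n + 2 * (i : ℕ)) ((g i : ↥R) : PowerSeries F) ≠ 0 := by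
        intro i; fin_cases i
        · exact hg0c
        · exact hg2c
      have hspan := genLem R hR I n hAll g
        (by intro i; fin_cases i; exacts [hg0I, hg2I])
        (fun i => n + 2 * (i : ℕ)) hd1 hd2 ?_
      · exact absurd (hno2 2 ⟨g, hspan⟩) (by omega)
      intro h hh m hv hc
      have hnm := horder h hh m hc
      have hm1 := hnP1 h hh m hv hc
      rcases (show (m - n) % 3 = 0 ∨ (m - n) % 3 = 1 ∨ (m - n) % 3 = 2 by omega) with hmod | hmod | hmod
      · exact ⟨0, red_mono R hR g _ hd1 hd2 h m hv 0 (m - n)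
          (by show m = n + 2 * (0 : ℕ) + (m - n); omega) (by omega) (by omega) (by omega)⟩
      · exact ⟨0, red_mono R hR g _ hd1 hd2 h m hv 0 (m - n)
          (by show m = n + 2 * (0 : ℕ) + (m - n); omega) (by omega) (by omega) (by omega)⟩
      · exact ⟨1, red_mono R hR g _ hd1 hd2 h m hv 1 (m - n - 2)
          (by show m = n + 2 * (1 : ℕ) + (m - n - 2); omega) (by omega) (by omega) (by omega)⟩
    · have hnP2 : ∀ h : ↥R, h ∈ I → ∀ m, vge (h : PowerSeries F) m →
          coeff (R := F) m (h : PowerSeries F) ≠ 0 → m ≠ n + 2 := by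
        rintro h hh m hv hc rfl
        exact hP2 ⟨h, hh, hv, hc⟩
      by_cases hP5 : ∃ x : ↥R, x ∈ I ∧ vge (x : PowerSeries F) (n+5)
          ∧ coeff (R := F) (n+5) (x : PowerSeries F) ≠ 0
      · -- two generators of orders n, n+5 : contradiction
        exfalso
        obtain ⟨g5, hg5I, hg5v, hg5c⟩ := hP5
        set g : Fin 2 → ↥R := ![g0, g5] with hg
        have hd1 : ∀ i : Fin 2, vge ((g i : ↥R) : PowerSeries F) (n + 5 * (i : ℕ)) := by
          intro i; fin_cases i
          · exact hg0v
          · exact hg5v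
        have hd2 : ∀ i : Fin 2, coeff (R := F) (n + 5 * (i : ℕ)) ((g i : ↥R) : PowerSeries F) ≠ 0 := by
          intro i; fin_cases i
          · exact hg0c
          · exact hg5c
        have hspan := genLem R hR I n hAll g
          (by intro i; fin_cases i; exacts [hg0I, hg5I])
          (fun i => n + 5 * (i : ℕ)) hd1 hd2 ?_
        · exact absurd (hno2 2 ⟨g, hspan⟩) (by omega)
        intro h hh m hv hc
        have hnm := horder h hh m hc
        have hm1 := hnP1 h hh m hv hc
        have hm2 := hnP2 h hh m hv hc
        rcases (show (m - n) % 3 = 0 ∨ (m - n) % 3 = 1 ∨ (m - n) % 3 = 2 by omega) with hmod | hmod | hmod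
        · exact ⟨0, red_mono R hR g _ hd1 hd2 h m hv 0 (m - n)
            (by show m = n + 5 * (0 : ℕ) + (m - n); omega) (by omega) (by omega) (by omega)⟩
        · exact ⟨0, red_mono R hR g _ hd1 hd2 h m hv 0 (m - n)
            (by show m = n + 5 * (0 : ℕ) + (m - n); omega) (by omega) (by omega) (by omega)⟩
        · exact ⟨1, red_mono R hR g _ hd1 hd2 h m hv 1 (m - n - 5)
            (by show m = n + 5 * (1 : ℕ) + (m - n - 5); omega) (by omega) (by omega) (by omega)⟩
      · -- one generator of order n : contradiction
        exfalso
        have hnP5 : ∀ h : ↥R, h ∈ I → ∀ m, vge (h : PowerSeries F) m →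
            coeff (R := F) m (h : PowerSeries F) ≠ 0 → m ≠ n + 5 := by
          rintro h hh m hv hc rfl
          exact hP5 ⟨h, hh, hv, hc⟩
        set g : Fin 1 → ↥R := ![g0] with hg
        have hd1 : ∀ i : Fin 1, vge ((g i : ↥R) : PowerSeries F) n := by
          intro i; fin_cases i
          exact hg0v
        have hd2 : ∀ i : Fin 1, coeff (R := F) n ((g i : ↥R) : PowerSeries F) ≠ 0 := by
          intro i; fin_cases i
          exact hg0c
        have hspan := genLem R hR I n hAll g
          (by intro i; fin_cases i; exact hg0I)
          (fun _ => n) hd1 hd2 ?_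
        · exact absurd (hno2 1 ⟨g, hspan⟩) (by omega)
        intro h hh m hv hc
        have hnm := horder h hh m hc
        have hm1 := hnP1 h hh m hv hc
        have hm2 := hnP2 h hh m hv hc
        have hm5 := hnP5 h hh m hv hc
        exact ⟨0, red_mono R hR g _ hd1 hd2 h m hv 0 (m - n)
          (by show m = n + (m - n); omega) (by omega) (by omega) (by omega)⟩

lemma prodKI (I J : Ideal ↥R) {n m : ℕ} (hn6 : 6 ≤ n) (hIK : I = KI R n)
    (hJm : ∀ y ∈ J, vge ((y : ↥R) : PowerSeries F) m) (y0 : ↥R) (hy0J : y0 ∈ J)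
    (hy0v : vge ((y0 : ↥R) : PowerSeries F) m)
    (hy0c : coeff (R := F) m ((y0 : ↥R) : PowerSeries F) ≠ 0) :
    I * J = KI R (n + m) := by
  apply le_antisymm
  · rw [Ideal.mul_le]
    intro r hr y hy
    have h1 : vge ((r : ↥R) : PowerSeries F) n := by
      rw [hIK] at hr
      exact hr
    have h2 := vge_mul h1 (hJm y hy)
    show vge ((r * y : ↥R) : PowerSeries F) (n + m)
    have hco : ((r * y : ↥R) : PowerSeries F)
        = ((r : ↥R) : PowerSeries F) * ((y : ↥R) : PowerSeries F) := rfl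
    rw [hco]
    exact h2
  · intro x hx
    have hvx : vge ((x : ↥R) : PowerSeries F) (n + m) := hx
    obtain ⟨u, hu⟩ : (X : PowerSeries F) ^ m ∣ ((y0 : ↥R) : PowerSeries F) :=
      PowerSeries.X_pow_dvd_iff.2 (fun mm hmm => hy0v mm hmm)
    have hu0 : constantCoeff (R := F) u ≠ 0 := by
      intro hc
      apply hy0c
      have h0 : coeff (R := F) (0 + m) ((X : PowerSeries F) ^ m * u) = coeff (R := F) 0 u :=
        PowerSeries.coeff_X_pow_mul u m 0
      rw [Nat.zero_add] at h0
      rw [hu, h0, PowerSeries.coeff_zero_eq_constantCoeff, hc]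
    obtain ⟨w, hw⟩ : (X : PowerSeries F) ^ (n + m) ∣ ((x : ↥R) : PowerSeries F) :=
      PowerSeries.X_pow_dvd_iff.2 (fun mm hmm => hvx mm hmm)
    set q : PowerSeries F := (X : PowerSeries F) ^ n * (w * u⁻¹) with hq
    have hqv : vge q n := by
      rw [hq]
      exact vge_mul_right (vge_Xpow n)
    have hqR : q ∈ R := by
      rw [hR]
      exact ⟨hqv 1 (by omega), hqv 2 (by omega), hqv 5 (by omega)⟩
    have hprod : q * ((y0 : ↥R) : PowerSeries F) = ((x : ↥R) : PowerSeries F) := by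
      rw [hq, hu, hw]
      calc (X : PowerSeries F) ^ n * (w * u⁻¹) * ((X : PowerSeries F) ^ m * u)
          = (X : PowerSeries F) ^ (n + m) * w * (u⁻¹ * u) := by ring
        _ = (X : PowerSeries F) ^ (n + m) * w := by
            rw [PowerSeries.inv_mul_cancel u hu0, mul_one]
    have hxeq : x = (⟨q, hqR⟩ : ↥R) * y0 := by
      apply Subtype.ext
      rw [show (((⟨q, hqR⟩ : ↥R) * y0 : ↥R) : PowerSeries F) = q * ((y0 : ↥R) : PowerSeries F)
        from rfl]
      rw [hprod]
    rw [hxeq]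
    refine Ideal.mul_mem_mul ?_ hy0J
    rw [hIK]
    exact hqv

def KF (N : ℕ) : Ideal (PowerSeries F) where
  carrier := {f | vge f N}
  add_mem' := fun ha hb => vge_add ha hb
  zero_mem' := vge_zero N
  smul_mem' := fun c x hx => by
    have := vge_mul_left (f := c) hx
    simpa using this

end Ring

end S3S4

open PowerSeries in
/-- Fact (3) for `R = F[[s³,s⁴]]`: if `I`, `J` are nonzero ideals of `R` and
`μ_R(I) = 3`, then `μ_R(IJ) = 3` and `IJ` is integrally closed
(`IJ = IJ·F[[s]] ∩ R`). -/
theorem mug_mul_s3s4 {F : Type*} [Field F] (R : Subring (PowerSeries F))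
    (hR : ∀ f : PowerSeries F, f ∈ R ↔
      PowerSeries.coeff (R := F) 1 f = 0 ∧ PowerSeries.coeff (R := F) 2 f = 0 ∧ PowerSeries.coeff (R := F) 5 f = 0)
    (I J : Ideal ↥R) (hI : I ≠ ⊥) (hJ : J ≠ ⊥) (hmuI : mug I = 3) :
    mug (I * J) = 3 ∧ I * J = Ideal.comap R.subtype (Ideal.map R.subtype (I * J)) := by
  classical
  have hno2 : ∀ k, (∃ x : Fin k → ↥R, Ideal.span (Set.range x) = I) → 3 ≤ k := by
    intro k hk
    have h1 : mug I ≤ k := Nat.sInf_le hk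
    omega
  obtain ⟨n, hn6, hIn⟩ := S3S4.key R hR I hI hno2
  obtain ⟨m, hmAll, y0, hy0J, hy0v, hy0c⟩ := S3S4.minorder R J hJ
  have hprod : I * J = S3S4.KI R (n + m) :=
    S3S4.prodKI R hR I J hn6 hIn hmAll y0 hy0J hy0v hy0c
  constructor
  · rw [hprod]
    exact S3S4.mug_KI R hR (n + m) (by omega)
  · rw [hprod]
    ext x
    constructor
    · intro hx
      exact Ideal.mem_comap.2 (Ideal.mem_map_of_mem _ hx)
    · intro hx
      have h2 : Ideal.map R.subtype (S3S4.KI R (n + m)) ≤ S3S4.KF (n + m) := by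
        rw [Ideal.map_le_iff_le_comap]
        intro z hz
        exact Ideal.mem_comap.2 (show S3S4.vge ((z : ↥R) : PowerSeries F) (n + m) from hz)
      have h3 : S3S4.vge ((x : ↥R) : PowerSeries F) (n + m) := h2 (Ideal.mem_comap.1 hx)
      exact h3
end

section
/- Let F be a field, R = F[[s^3, s^4]], g' = s^6 + s^7 t + s^8 t^2, and f = s^6 − s^7 t, all in R[t]. Then fg' = s^{12} − s^{15} t^3, c(fg') = s^{12}R, and c(fg')·c(f) = (s^{18}, s^{19})R is strictly contained in c(f)^2·c(g') = (s^{18}, s^{19}, s^{20})R. Hence μ_R(g') ≥ 3 (in fact μ_R(g') = 3). -/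
open Polynomial
set_option synthInstance.maxHeartbeats 1000000

section DMHelpers
variable {A : Type*} [CommRing A]
open Pointwise

variable {A : Type*} [CommRing A]

lemma cont_mul_le (f g : A[X]) : cont (f * g) ≤ cont f * cont g := by
  rw [cont, Ideal.span_le]
  rintro x ⟨n, rfl⟩
  rw [coeff_mul]
  exact Ideal.sum_mem _ fun c _ => Ideal.mul_mem_mul
    (Ideal.subset_span ⟨c.1, rfl⟩) (Ideal.subset_span ⟨c.2, rfl⟩)

lemma dm_quad (g0 g1 g2 : A) (f : A[X]) :
    cont (f * (C g0 + C g1 * X + C g2 * X ^ 2)) * cont f ^ 2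
      = cont f ^ 3 * cont (C g0 + C g1 * X + C g2 * X ^ 2) := by
  set g : A[X] := C g0 + C g1 * X + C g2 * X ^ 2 with hg
  have hgdeg : g.natDegree ≤ 2 := by rw [hg]; compute_degree
  set J : Ideal A := cont (f * g) * cont f ^ 2 with hJ
  set N : ℤ := (f.natDegree : ℤ) with hN
  set F : ℤ → A := fun i => if 0 ≤ i then f.coeff i.toNat else 0 with hF
  set H : ℤ → A := fun m => if 0 ≤ m then (f * g).coeff m.toNat else 0 with hH
  have Fneg : ∀ i : ℤ, i < 0 → F i = 0 := by intro i hi; simp [hF, not_le.mpr hi]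
  have Fbig : ∀ i : ℤ, N < i → F i = 0 := by
    intro i hi
    simp only [hF]
    split
    · exact coeff_eq_zero_of_natDegree_lt (by omega)
    · rfl
  have Fnat : ∀ m : ℕ, F (m : ℤ) = f.coeff m := by intro m; simp [hF]
  have Hmem : ∀ m : ℤ, H m ∈ cont (f * g) := by
    intro m
    simp only [hH]
    split
    · exact Ideal.subset_span ⟨m.toNat, rfl⟩
    · exact zero_mem _
  have FFmem : ∀ i j : ℤ, 0 ≤ i → 0 ≤ j → F i * F j ∈ cont f ^ 2 := by
    intro i j hi hj
    rw [sq]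
    exact Ideal.mul_mem_mul
      (by simp only [hF, if_pos hi]; exact Ideal.subset_span ⟨i.toNat, rfl⟩)
      (by simp only [hF, if_pos hj]; exact Ideal.subset_span ⟨j.toNat, rfl⟩)
  have cg0 : g.coeff 0 = g0 := by simp [hg]
  have cg1 : g.coeff 1 = g1 := by simp [hg]
  have cg2 : g.coeff 2 = g2 := by simp [hg]
  have conv : ∀ m : ℤ, H m = g.coeff 0 * F m + g.coeff 1 * F (m - 1) + g.coeff 2 * F (m - 2) := by
    intro m
    rcases lt_or_ge m 0 with hm | hm
    · rw [Fneg m hm, Fneg _ (by omega), Fneg _ (by omega)]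
      simp [hH, not_le.mpr hm]
    · have e : f * g = f * C g0 + (f * C g1) * X ^ 1 + (f * C g2) * X ^ 2 := by
        rw [hg]; ring
      have h1 : ((1:ℕ) ≤ m.toNat) = (0 ≤ m - 1) := by simp; omega
      have h2 : ((2:ℕ) ≤ m.toNat) = (0 ≤ m - 2) := by simp; omega
      simp only [hH, if_pos hm, e, coeff_add, coeff_mul_C, coeff_mul_X_pow', hF, cg0, cg1, cg2,
        h1, h2]
      split_ifs <;>
        first
          | ring1
          | (simp only [show m.toNat - 1 = (m - 1).toNat from by omega,
              show m.toNat - 2 = (m - 2).toNat from by omega]; ring1)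

  have zJ : (0:A) ∈ J := zero_mem _
  have key : ∀ n : ℕ, ∀ (l : ℕ) (i j k : ℤ), k ≤ j → j ≤ i →
      ((N + 3) - (i - j - 3*k + if l = 0 then 2 else 0)).toNat ≤ n →
      F i * F j * F k * g.coeff l ∈ J := by
    intro n
    induction n with
    | zero =>
      intro l i j k hkj hji hn
      rcases lt_or_ge k 0 with hk | hk
      · rw [Fneg k hk, mul_zero, zero_mul]; exact zJ
      rcases lt_or_ge N i with hi | hi
      · rw [Fbig i hi, zero_mul, zero_mul, zero_mul]; exact zJ
      exfalso
      have hc : (if l = 0 then (2:ℤ) else 0) ≤ 2 := by split <;> norm_num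
      omega
    | succ n IH =>
      intro l i j k hkj hji hn
      rcases lt_or_ge k 0 with hk | hk
      · rw [Fneg k hk, mul_zero, zero_mul]; exact zJ
      rcases lt_or_ge N i with hi | hi
      · rw [Fbig i hi, zero_mul, zero_mul, zero_mul]; exact zJ
      rcases lt_or_ge 2 l with hl | hl
      · rw [coeff_eq_zero_of_natDegree_lt (by omega), mul_zero]; exact zJ
      have hc : (if l = 0 then (2:ℤ) else 0) ≤ 2 := by split <;> norm_num
      interval_cases l
      · -- l = 0, pivot k
        norm_num at hn
        have eq1 : F i * F j * F k * g.coeff 0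
            = H k * (F i * F j) - F i * F j * F (k-1) * g.coeff 1
              - F i * F j * F (k-2) * g.coeff 2 := by
          linear_combination (-(F i * F j)) * conv k
        rw [eq1]
        refine sub_mem (sub_mem (Ideal.mul_mem_mul (Hmem k) (FFmem i j (by omega) (by omega))) ?_) ?_
        · exact IH 1 i j (k-1) (by omega) hji (by norm_num; omega)
        · exact IH 2 i j (k-2) (by omega) hji (by norm_num; omega)
      · -- l = 1, pivot j
        norm_num at hn
        have cv : H (j+1) = g.coeff 0 * F (j+1) + g.coeff 1 * F j + g.coeff 2 * F (j-1) := by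
          have h := conv (j+1)
          rw [show j+1-1 = j from by ring, show j+1-2 = j-1 from by ring] at h
          exact h
        have eq1 : F i * F j * F k * g.coeff 1
            = H (j+1) * (F i * F k) - F (j+1) * F i * F k * g.coeff 0
              - F (j-1) * F i * F k * g.coeff 2 := by
          linear_combination (-(F i * F k)) * cv
        have mem0 : F (j+1) * F i * F k * g.coeff 0 ∈ J := by
          rcases le_or_gt (j+1) i with hcc | hcc
          · have h := IH 0 i (j+1) k (by omega) hcc (by norm_num; omega)
            rwa [show F i * F (j+1) * F k * g.coeff 0
              = F (j+1) * F i * F k * g.coeff 0 from by ring] at h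
          · exact IH 0 (j+1) i k (by omega) (by omega) (by norm_num; omega)
        have mem2 : F (j-1) * F i * F k * g.coeff 2 ∈ J := by
          rcases le_or_gt k (j-1) with hcc | hcc
          · have h := IH 2 i (j-1) k hcc (by omega) (by norm_num; omega)
            rwa [show F i * F (j-1) * F k * g.coeff 2
              = F (j-1) * F i * F k * g.coeff 2 from by ring] at h
          · have h := IH 2 i k (j-1) (by omega) (by omega) (by norm_num; omega)
            rwa [show F i * F k * F (j-1) * g.coeff 2
              = F (j-1) * F i * F k * g.coeff 2 from by ring] at h
        rw [eq1]
        exact sub_mem (sub_mem (Ideal.mul_mem_mul (Hmem _) (FFmem i k (by omega) (by omega))) mem0) mem2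
      · -- l = 2, pivot i
        norm_num at hn
        have cv : H (i+2) = g.coeff 0 * F (i+2) + g.coeff 1 * F (i+1) + g.coeff 2 * F i := by
          have h := conv (i+2)
          rw [show i+2-1 = i+1 from by ring, show i+2-2 = i from by ring] at h
          exact h
        have eq1 : F i * F j * F k * g.coeff 2
            = H (i+2) * (F j * F k) - F (i+2) * F j * F k * g.coeff 0
              - F (i+1) * F j * F k * g.coeff 1 := by
          linear_combination (-(F j * F k)) * cv
        rw [eq1]
        refine sub_mem (sub_mem (Ideal.mul_mem_mul (Hmem _) (FFmem j k (by omega) (by omega))) ?_) ?_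
        · exact IH 0 (i+2) j k hkj (by omega) (by norm_num; omega)
        · exact IH 1 (i+1) j k hkj (by omega) (by norm_num; omega)
  have sorted : ∀ (l : ℕ) (a b c : ℕ), c ≤ b → b ≤ a →
      f.coeff a * f.coeff b * f.coeff c * g.coeff l ∈ J := by
    intro l a b c h1 h2
    have h := key _ l a b c (by exact_mod_cast h1) (by exact_mod_cast h2) le_rfl
    simpa [Fnat] using h
  have main : ∀ (i j k l : ℕ), f.coeff i * f.coeff j * f.coeff k * g.coeff l ∈ J := by
    intro i j k l
    rcases le_total i j with h1 | h1 <;> rcases le_total j k with h2 | h2 <;>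
      rcases le_total i k with h3 | h3 <;>
      first
      | exact sorted l i j k (by omega) (by omega)
      | (rw [show f.coeff i * f.coeff j * f.coeff k
            = f.coeff j * f.coeff i * f.coeff k from by ring]
         exact sorted l j i k (by omega) (by omega))
      | (rw [show f.coeff i * f.coeff j * f.coeff k
            = f.coeff i * f.coeff k * f.coeff j from by ring]
         exact sorted l i k j (by omega) (by omega))
      | (rw [show f.coeff i * f.coeff j * f.coeff k
            = f.coeff k * f.coeff i * f.coeff j from by ring]
         exact sorted l k i j (by omega) (by omega))
      | (rw [show f.coeff i * f.coeff j * f.coeff k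
            = f.coeff j * f.coeff k * f.coeff i from by ring]
         exact sorted l j k i (by omega) (by omega))
      | (rw [show f.coeff i * f.coeff j * f.coeff k
            = f.coeff k * f.coeff j * f.coeff i from by ring]
         exact sorted l k j i (by omega) (by omega))
  apply le_antisymm
  · calc cont (f * g) * cont f ^ 2 ≤ (cont f * cont g) * cont f ^ 2 :=
          Ideal.mul_mono (cont_mul_le f g) le_rfl
      _ = cont f ^ 3 * cont g := by ring
  · have e : cont f ^ 3 * cont g = Ideal.span
        (Set.range f.coeff * Set.range f.coeff * Set.range f.coeff * Set.range g.coeff) := by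
      rw [show cont f ^ 3 * cont g = cont f * cont f * cont f * cont g from by ring]
      simp only [cont]
      rw [Ideal.span_mul_span', Ideal.span_mul_span', Ideal.span_mul_span']
    rw [e, Ideal.span_le]
    rintro x ⟨_, ⟨_, ⟨_, ⟨i, rfl⟩, _, ⟨j, rfl⟩, rfl⟩, _, ⟨k, rfl⟩, rfl⟩, _, ⟨l, rfl⟩, rfl⟩
    exact main i j k l


lemma cont_quad (b0 b1 b2 : A) :
    cont (C b0 + C b1 * X + C b2 * X ^ 2) = Ideal.span {b0, b1, b2} := by
  have hd : (C b0 + C b1 * X + C b2 * X ^ 2).natDegree ≤ 2 := by compute_degree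
  apply le_antisymm
  · rw [cont, Ideal.span_le]
    rintro x ⟨n, rfl⟩
    match n with
    | 0 => exact Ideal.subset_span (by simp)
    | 1 => exact Ideal.subset_span (by simp)
    | 2 => exact Ideal.subset_span (by simp)
    | (n+3) => rw [coeff_eq_zero_of_natDegree_lt (by omega)]; exact zero_mem _
  · rw [Ideal.span_le]
    intro x hx
    simp only [Set.mem_insert_iff, Set.mem_singleton_iff] at hx
    rcases hx with rfl | rfl | rfl
    · exact Ideal.subset_span ⟨0, by simp⟩
    · exact Ideal.subset_span ⟨1, by simp⟩
    · exact Ideal.subset_span ⟨2, by simp⟩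

lemma cont_sub1 (b0 b1 : A) :
    cont (C b0 - C b1 * X) = Ideal.span {b0, b1} := by
  have hd : (C b0 - C b1 * X).natDegree ≤ 1 := by compute_degree
  apply le_antisymm
  · rw [cont, Ideal.span_le]
    rintro x ⟨n, rfl⟩
    match n with
    | 0 => exact Ideal.subset_span (by simp)
    | 1 =>
      have : (C b0 - C b1 * X).coeff 1 = -b1 := by simp
      rw [this]
      exact neg_mem (Ideal.subset_span (by simp))
    | (n+2) => rw [coeff_eq_zero_of_natDegree_lt (by omega)]; exact zero_mem _
  · rw [Ideal.span_le]
    intro x hx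
    simp only [Set.mem_insert_iff, Set.mem_singleton_iff] at hx
    rcases hx with h | h <;> subst h
    · exact Ideal.subset_span ⟨0, by simp⟩
    · have h1 : x = -((C b0 - C x * X).coeff 1) := by simp
      have h2 : -((C b0 - C x * X).coeff 1) ∈ cont (C b0 - C x * X) :=
        neg_mem (Ideal.subset_span ⟨1, rfl⟩)
      rwa [← h1] at h2

lemma cont_sub3 (b0 b1 : A) :
    cont (C b0 - C b1 * X ^ 3) = Ideal.span {b0, b1} := by
  have hd : (C b0 - C b1 * X ^ 3).natDegree ≤ 3 := by compute_degree
  apply le_antisymm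
  · rw [cont, Ideal.span_le]
    rintro x ⟨n, rfl⟩
    match n with
    | 0 => exact Ideal.subset_span (by simp)
    | 1 => simp only [coeff_sub, coeff_C, coeff_C_mul, coeff_X_pow]; norm_num
    | 2 => simp only [coeff_sub, coeff_C, coeff_C_mul, coeff_X_pow]; norm_num
    | 3 =>
      have : (C b0 - C b1 * X ^ 3).coeff 3 = -b1 := by simp
      rw [this]
      exact neg_mem (Ideal.subset_span (by simp))
    | (n+4) => rw [coeff_eq_zero_of_natDegree_lt (by omega)]; exact zero_mem _
  · rw [Ideal.span_le]
    intro x hx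
    simp only [Set.mem_insert_iff, Set.mem_singleton_iff] at hx
    rcases hx with h | h <;> subst h
    · exact Ideal.subset_span ⟨0, by simp⟩
    · have h1 : x = -((C b0 - C x * X ^ 3).coeff 3) := by simp
      have h2 : -((C b0 - C x * X ^ 3).coeff 3) ∈ cont (C b0 - C x * X ^ 3) :=
        neg_mem (Ideal.subset_span ⟨3, rfl⟩)
      rwa [← h1] at h2
end DMHelpers

set_option maxHeartbeats 1000000 in
/-- Remark 5.2: in `R = F[[s³,s⁴]]`, for `g' = s⁶ + s⁷t + s⁸t²` and `f = s⁶ - s⁷t` we have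
`fg' = s¹² - s¹⁵t³`, `c(fg') = s¹²R`, and
`c(fg')c(f) = (s¹⁸,s¹⁹)R ⊊ (s¹⁸,s¹⁹,s²⁰)R = c(f)²c(g')`; hence `μ_R(g') = 3`. -/
theorem remark_5_2 {F : Type*} [Field F] (R : Subring (PowerSeries F))
    (hR : ∀ f : PowerSeries F, f ∈ R ↔
      PowerSeries.coeff (R := F) 1 f = 0 ∧ PowerSeries.coeff (R := F) 2 f = 0 ∧ PowerSeries.coeff (R := F) 5 f = 0)
    (a : ℕ → ↥R) (ha : ∀ k, 6 ≤ k → (a k : PowerSeries F) = PowerSeries.X ^ k)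
    (g' f : Polynomial ↥R)
    (hg' : g' = Polynomial.C (a 6) + Polynomial.C (a 7) * Polynomial.X +
      Polynomial.C (a 8) * Polynomial.X ^ 2)
    (hf : f = Polynomial.C (a 6) - Polynomial.C (a 7) * Polynomial.X) :
    f * g' = Polynomial.C (a 12) - Polynomial.C (a 15) * Polynomial.X ^ 3 ∧
    cont (f * g') = Ideal.span {a 12} ∧
    cont (f * g') * cont f = Ideal.span {a 18, a 19} ∧
    cont f ^ 2 * cont g' = Ideal.span {a 18, a 19, a 20} ∧
    Ideal.span {a 18, a 19} < Ideal.span {a 18, a 19, a 20} ∧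
    dmNumber ↥R g' = 3 := by
  have hmulk : ∀ p q r : ℕ, 6 ≤ p → 6 ≤ q → p + q = r → a p * a q = a r := by
    intro p q r hp hq hr
    apply Subtype.coe_injective
    push_cast [ha p hp, ha q hq, ha r (by omega)]
    rw [← pow_add, hr]
  have mul3 : ∀ p q w r : ℕ, 6 ≤ p → 6 ≤ q → 6 ≤ w → p + q + w = r →
      a p * a q * a w = a r := by
    intro p q w r hp hq hw hr
    rw [hmulk p q (p+q) hp hq rfl, hmulk (p+q) w r (by omega) hw hr]
  obtain ⟨r3, hr3⟩ : ∃ r : ↥R, (r : PowerSeries F) = PowerSeries.X ^ 3 :=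
    ⟨⟨PowerSeries.X ^ 3, (hR _).mpr (by
    constructor
    · rw [PowerSeries.coeff_X_pow]; norm_num
    constructor
    · rw [PowerSeries.coeff_X_pow]; norm_num
    · rw [PowerSeries.coeff_X_pow]; norm_num)⟩, rfl⟩
  have hshift : ∀ p : ℕ, 6 ≤ p → a (p + 3) = a p * r3 := by
    intro p hp
    apply Subtype.coe_injective
    push_cast [ha p hp, ha (p+3) (by omega), hr3]
    rw [← pow_add]
  -- coefficient vanishing facts for elements of R
  have hcf1 : ∀ u : ↥R, PowerSeries.coeff (R := F) 1 (u : PowerSeries F) = 0 :=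
    fun u => ((hR _).mp u.2).1
  have hcf2 : ∀ u : ↥R, PowerSeries.coeff (R := F) 2 (u : PowerSeries F) = 0 :=
    fun u => ((hR _).mp u.2).2.1
  -- Part 1
  have part1 : f * g' = C (a 12) - C (a 15) * X ^ 3 := by
    have hC : (C (a 6) * C (a 8) : Polynomial ↥R) = C (a 7) * C (a 7) := by
      rw [← C_mul, ← C_mul, hmulk 6 8 14 (by norm_num) (by norm_num) rfl,
        hmulk 7 7 14 (by norm_num) (by norm_num) rfl]
    rw [hf, hg', show a 12 = a 6 * a 6 from (hmulk 6 6 12 (by norm_num) (by norm_num) rfl).symm,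
      show a 15 = a 7 * a 8 from (hmulk 7 8 15 (by norm_num) (by norm_num) rfl).symm,
      C_mul, C_mul]
    linear_combination (X : Polynomial ↥R) ^ 2 * hC
  -- Part 2
  have hcfg : cont (f * g') = Ideal.span {a 12, a 15} := by rw [part1, cont_sub3]
  have part2 : cont (f * g') = Ideal.span {a 12} := by
    rw [hcfg, Ideal.span_insert, sup_eq_left.mpr (Ideal.span_singleton_le_span_singleton.mpr
      ⟨r3, hshift 12 (by norm_num)⟩)]
  have hcf : cont f = Ideal.span {a 6, a 7} := by rw [hf, cont_sub1]
  have hcg : cont g' = Ideal.span {a 6, a 7, a 8} := by rw [hg', cont_quad]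
  -- Part 3
  have part3 : cont (f * g') * cont f = Ideal.span {a 18, a 19} := by
    rw [part2, hcf, Ideal.span_insert (a 6) {a 7}, Submodule.mul_sup,
      Ideal.span_singleton_mul_span_singleton, Ideal.span_singleton_mul_span_singleton,
      hmulk 12 6 18 (by norm_num) (by norm_num) rfl,
      hmulk 12 7 19 (by norm_num) (by norm_num) rfl, ← Ideal.span_insert]
  -- Part 4
  have part4 : cont f ^ 2 * cont g' = Ideal.span {a 18, a 19, a 20} := by
    rw [hcf, hcg, sq, Ideal.span_mul_span', Ideal.span_mul_span']
    apply le_antisymm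
    · rw [Ideal.span_le]
      rintro x ⟨_, ⟨u, hu, v, hv, rfl⟩, w, hw, rfl⟩
      simp only [Set.mem_insert_iff, Set.mem_singleton_iff] at hu hv hw
      have mem18 : a 18 ∈ Ideal.span ({a 18, a 19, a 20} : Set ↥R) :=
        Ideal.subset_span (by simp)
      have mem19 : a 19 ∈ Ideal.span ({a 18, a 19, a 20} : Set ↥R) :=
        Ideal.subset_span (by simp)
      have mem20 : a 20 ∈ Ideal.span ({a 18, a 19, a 20} : Set ↥R) :=
        Ideal.subset_span (by simp)
      have mem21 : a 21 ∈ Ideal.span ({a 18, a 19, a 20} : Set ↥R) := by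
        rw [show (21:ℕ) = 18 + 3 from rfl, hshift 18 (by norm_num)]
        exact Ideal.mul_mem_right _ _ mem18
      have mem22 : a 22 ∈ Ideal.span ({a 18, a 19, a 20} : Set ↥R) := by
        rw [show (22:ℕ) = 19 + 3 from rfl, hshift 19 (by norm_num)]
        exact Ideal.mul_mem_right _ _ mem19
      rcases hu with rfl | rfl <;> rcases hv with rfl | rfl <;> rcases hw with rfl | rfl | rfl <;> beta_reduce
      · rw [mul3 6 6 6 18 (by norm_num) (by norm_num) (by norm_num) rfl]; exact mem18
      · rw [mul3 6 6 7 19 (by norm_num) (by norm_num) (by norm_num) rfl]; exact mem19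
      · rw [mul3 6 6 8 20 (by norm_num) (by norm_num) (by norm_num) rfl]; exact mem20
      · rw [mul3 6 7 6 19 (by norm_num) (by norm_num) (by norm_num) rfl]; exact mem19
      · rw [mul3 6 7 7 20 (by norm_num) (by norm_num) (by norm_num) rfl]; exact mem20
      · rw [mul3 6 7 8 21 (by norm_num) (by norm_num) (by norm_num) rfl]; exact mem21
      · rw [mul3 7 6 6 19 (by norm_num) (by norm_num) (by norm_num) rfl]; exact mem19
      · rw [mul3 7 6 7 20 (by norm_num) (by norm_num) (by norm_num) rfl]; exact mem20
      · rw [mul3 7 6 8 21 (by norm_num) (by norm_num) (by norm_num) rfl]; exact mem21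
      · rw [mul3 7 7 6 20 (by norm_num) (by norm_num) (by norm_num) rfl]; exact mem20
      · rw [mul3 7 7 7 21 (by norm_num) (by norm_num) (by norm_num) rfl]; exact mem21
      · rw [mul3 7 7 8 22 (by norm_num) (by norm_num) (by norm_num) rfl]; exact mem22
    · rw [Ideal.span_le]
      intro x hx
      simp only [Set.mem_insert_iff, Set.mem_singleton_iff] at hx
      rcases hx with rfl | rfl | rfl
      · rw [show a 18 = a 6 * a 6 * a 6 from
          (mul3 6 6 6 18 (by norm_num) (by norm_num) (by norm_num) rfl).symm]
        exact Ideal.subset_span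
          (Set.mul_mem_mul (Set.mul_mem_mul (by simp) (by simp)) (by simp))
      · rw [show a 19 = a 6 * a 6 * a 7 from
          (mul3 6 6 7 19 (by norm_num) (by norm_num) (by norm_num) rfl).symm]
        exact Ideal.subset_span
          (Set.mul_mem_mul (Set.mul_mem_mul (by simp) (by simp)) (by simp))
      · rw [show a 20 = a 6 * a 7 * a 7 from
          (mul3 6 7 7 20 (by norm_num) (by norm_num) (by norm_num) rfl).symm]
        exact Ideal.subset_span
          (Set.mul_mem_mul (Set.mul_mem_mul (by simp) (by simp)) (by simp))
  -- Part 5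
  have hnotmem : a 20 ∉ Ideal.span ({a 18, a 19} : Set ↥R) := by
    intro hmem
    obtain ⟨u, v, huv⟩ := Ideal.mem_span_pair.mp hmem
    have e : (u : PowerSeries F) * PowerSeries.X ^ 18 + (v : PowerSeries F) * PowerSeries.X ^ 19
        = PowerSeries.X ^ 20 := by
      have := congrArg (Subtype.val : ↥R → PowerSeries F) huv
      push_cast [ha 18 (by norm_num), ha 19 (by norm_num), ha 20 (by norm_num)] at this
      exact this
    have := congrArg (PowerSeries.coeff (R := F) 20) e
    rw [map_add, PowerSeries.coeff_mul_X_pow', PowerSeries.coeff_mul_X_pow',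
      PowerSeries.coeff_X_pow] at this
    norm_num at this
    simp [hcf2 u, hcf1 v] at this
  have part5 : Ideal.span ({a 18, a 19} : Set ↥R) < Ideal.span {a 18, a 19, a 20} := by
    constructor
    · apply Ideal.span_mono; intro x hx; simp only [Set.mem_insert_iff,
        Set.mem_singleton_iff] at hx ⊢; tauto
    · intro hle
      exact hnotmem (hle (Ideal.subset_span (by simp)))
  refine ⟨part1, part2, part3, part4, part5, ?_⟩
  -- Part 6
  have h3 : 3 ∈ {k | 0 < k ∧ ∀ f0 : Polynomial ↥R,
      cont (f0 * g') * cont f0 ^ (k - 1) = cont f0 ^ k * cont g'} := by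
    refine ⟨by norm_num, fun f0 => ?_⟩
    rw [hg']
    exact dm_quad (a 6) (a 7) (a 8) f0
  have hlow : ∀ m ∈ {k | 0 < k ∧ ∀ f0 : Polynomial ↥R,
      cont (f0 * g') * cont f0 ^ (k - 1) = cont f0 ^ k * cont g'}, 3 ≤ m := by
    rintro m ⟨hm0, hmf⟩
    by_contra hcon
    push_neg at hcon
    interval_cases m
    · -- m = 1
      have h := hmf f
      rw [pow_zero, mul_one, pow_one, part2, hcf, hcg] at h
      have h13 : a 13 ∈ Ideal.span ({a 6, a 7} : Set ↥R) * Ideal.span {a 6, a 7, a 8} := by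
        rw [show a 13 = a 6 * a 7 from (hmulk 6 7 13 (by norm_num) (by norm_num) rfl).symm]
        exact Ideal.mul_mem_mul (Ideal.subset_span (by simp)) (Ideal.subset_span (by simp))
      rw [← h, Ideal.mem_span_singleton] at h13
      obtain ⟨u, hu⟩ := h13
      have e : PowerSeries.X ^ 13 = PowerSeries.X ^ 12 * (u : PowerSeries F) := by
        have := congrArg (Subtype.val : ↥R → PowerSeries F) hu
        push_cast [ha 12 (by norm_num), ha 13 (by norm_num)] at this
        exact this
      have := congrArg (PowerSeries.coeff (R := F) 13) e
      rw [mul_comm (PowerSeries.X ^ 12 : PowerSeries F), PowerSeries.coeff_mul_X_pow',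
        PowerSeries.coeff_X_pow] at this
      norm_num at this
      simp [hcf1 u] at this
    · -- m = 2
      have h := hmf f
      rw [pow_one, part3, part4] at h
      exact (ne_of_lt part5) h
  show sInf _ = 3
  exact le_antisymm (Nat.sInf_le h3) (le_csInf ⟨3, h3⟩ hlow)
end

section
/- Let R ⊆ R̄ be a one-dimensional Noetherian local domain with R̄ = integral closure of R a DVR that is a finitely generated R-module, with the same residue field, uniformizer s, multiplicity e (so mR̄ = s^e R̄). For nonzero ideals I, J of R with IR̄ = s^n R̄, define γ(I) = {i : 1 ≤ i < e and ∃ a ∈ I with aR̄ = s^{n+i}R̄}. Then γ(IJ) contains γ(I), γ(J), and all sums i + j ≤ e − 1 with i ∈ γ(I), j ∈ γ(J). In particular, if |γ(I)| = e−1 then |γ(IJ)| = e−1 and IJ is integrally closed. -/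
open Polynomial

/-- With `I·R̄ = s^n R̄`, the set `γ(I) = {i | 1 ≤ i < e, ∃ a ∈ I, aR̄ = s^{n+i}R̄}`. -/
def gammaSet {R Rbar : Type*} [CommRing R] [CommRing Rbar] [Algebra R Rbar]
    (e : ℕ) (s : Rbar) (n : ℕ) (I : Ideal R) : Set ℕ :=
  {i | 1 ≤ i ∧ i < e ∧ ∃ a ∈ I, Ideal.span {algebraMap R Rbar a} = Ideal.span {s ^ (n + i)}}

/-- In a DVR, if an ideal maps to `s^k R̄`, some element has exact valuation `k`. -/
lemma exists_assoc_of_map_eq {R Rbar : Type*} [CommRing R] [CommRing Rbar] [IsDomain Rbar]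
    [IsDiscreteValuationRing Rbar] [Algebra R Rbar]
    (s : Rbar) (hs : Irreducible s) (I : Ideal R) (k : ℕ)
    (h : Ideal.map (algebraMap R Rbar) I = Ideal.span {s ^ k}) :
    ∃ a ∈ I, Associated (algebraMap R Rbar a) (s ^ k) := by
  by_contra hcon
  push_neg at hcon
  have hmax : IsLocalRing.maximalIdeal Rbar = Ideal.span {s} :=
    (IsDiscreteValuationRing.irreducible_iff_uniformizer s).mp hs
  have hle : Ideal.map (algebraMap R Rbar) I ≤ Ideal.span {s ^ (k + 1)} := by
    rw [Ideal.map_le_iff_le_comap]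
    intro a ha
    have h1 : algebraMap R Rbar a ∈ Ideal.span {s ^ k} := h ▸ Ideal.mem_map_of_mem _ ha
    rw [Ideal.mem_span_singleton] at h1
    obtain ⟨c, hc⟩ := h1
    have hcu : ¬ IsUnit c := by
      intro hcu
      exact hcon a ha (hc ▸ associated_mul_unit_left _ c hcu)
    have hcs : c ∈ Ideal.span {s} := by
      rw [← hmax]
      exact hcu
    rw [Ideal.mem_span_singleton] at hcs
    obtain ⟨d, hd⟩ := hcs
    rw [Ideal.mem_comap, Ideal.mem_span_singleton, hc, hd, pow_succ]
    exact ⟨d, by ring⟩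
  rw [h, Ideal.span_singleton_le_span_singleton] at hle
  obtain ⟨d, hd⟩ := hle
  rw [pow_succ, mul_assoc] at hd
  have h1 : (1 : Rbar) = s * d := by
    have := mul_left_cancel₀ (pow_ne_zero k hs.ne_zero) (hd.symm.trans (mul_one _).symm)
    exact this.symm
  exact hs.not_isUnit (IsUnit.of_mul_eq_one d h1.symm)

/-- Setup 5.3(3): let `R` be a one-dimensional Noetherian local domain whose integral
closure `R̄` is a DVR with uniformizer `s`, a finite `R`-module, with the same residue
field, and `mR̄ = s^e R̄` (`e` the multiplicity).  For nonzero ideals `I`, `J` with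
`IR̄ = s^n R̄`, `JR̄ = s^m R̄`, the set `γ(IJ)` contains `γ(I)`, `γ(J)`, and all sums
`i + j ≤ e - 1` with `i ∈ γ(I)`, `j ∈ γ(J)`.  In particular if `γ(I) = {1,…,e-1}` then
`γ(IJ) = {1,…,e-1}` and `IJ` is integrally closed (`IJ = IJ·R̄ ∩ R`). -/
theorem setup_5_3 {R Rbar : Type*} [CommRing R] [IsDomain R] [IsNoetherianRing R]
    [IsLocalRing R] [CommRing Rbar] [IsDomain Rbar] [IsDiscreteValuationRing Rbar]
    [Algebra R Rbar] [Module.Finite R Rbar] [Algebra.IsIntegral R Rbar]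
    (hinj : Function.Injective (algebraMap R Rbar))
    (hdim : ringKrullDim R = 1)
    (hres : ∀ y : Rbar, ∃ x : R, y - algebraMap R Rbar x ∈ IsLocalRing.maximalIdeal Rbar)
    (s : Rbar) (hs : Irreducible s) (e : ℕ)
    (he : Ideal.map (algebraMap R Rbar) (IsLocalRing.maximalIdeal R) = Ideal.span {s ^ e})
    (I J : Ideal R) (hI : I ≠ ⊥) (hJ : J ≠ ⊥) (n m : ℕ)
    (hIn : Ideal.map (algebraMap R Rbar) I = Ideal.span {s ^ n})
    (hJm : Ideal.map (algebraMap R Rbar) J = Ideal.span {s ^ m}) :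
    gammaSet e s n I ⊆ gammaSet e s (n + m) (I * J) ∧
    gammaSet e s m J ⊆ gammaSet e s (n + m) (I * J) ∧
    (∀ i ∈ gammaSet e s n I, ∀ j ∈ gammaSet e s m J, i + j ≤ e - 1 →
      i + j ∈ gammaSet e s (n + m) (I * J)) ∧
    (gammaSet e s n I = {i | 1 ≤ i ∧ i < e} →
      gammaSet e s (n + m) (I * J) = {i | 1 ≤ i ∧ i < e} ∧
      I * J = Ideal.comap (algebraMap R Rbar) (Ideal.map (algebraMap R Rbar) (I * J))) := by
  set f := algebraMap R Rbar with hf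
  have hmax : IsLocalRing.maximalIdeal Rbar = Ideal.span {s} :=
    (IsDiscreteValuationRing.irreducible_iff_uniformizer s).mp hs
  -- elements of exact valuation in I and J
  obtain ⟨aI, haI, haIa⟩ := exists_assoc_of_map_eq s hs I n hIn
  obtain ⟨bJ, hbJ, hbJa⟩ := exists_assoc_of_map_eq s hs J m hJm
  -- a generic product lemma
  have mulmem : ∀ (a b : R) (p q : ℕ), a ∈ I → b ∈ J → Associated (f a) (s ^ p) →
      Associated (f b) (s ^ q) →
      a * b ∈ I * J ∧ Associated (f (a * b)) (s ^ (p + q)) := by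
    intro a b p q ha hb h1 h2
    exact ⟨Ideal.mul_mem_mul ha hb, by rw [map_mul, pow_add]; exact h1.mul_mul h2⟩
  have part1 : gammaSet e s n I ⊆ gammaSet e s (n + m) (I * J) := by
    rintro i ⟨h1, h2, a, ha, hsp⟩
    have ha' := Ideal.span_singleton_eq_span_singleton.mp hsp
    obtain ⟨hmem, hass⟩ := mulmem a bJ (n + i) m ha hbJ ha' hbJa
    refine ⟨h1, h2, a * bJ, hmem, ?_⟩
    rw [Ideal.span_singleton_eq_span_singleton]
    rw [show n + m + i = n + i + m by omega]
    exact hass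
  have part2 : gammaSet e s m J ⊆ gammaSet e s (n + m) (I * J) := by
    rintro j ⟨h1, h2, b, hb, hsp⟩
    have hb' := Ideal.span_singleton_eq_span_singleton.mp hsp
    obtain ⟨hmem, hass⟩ := mulmem aI b n (m + j) haI hb haIa hb'
    refine ⟨h1, h2, aI * b, hmem, ?_⟩
    rw [Ideal.span_singleton_eq_span_singleton]
    rw [show n + m + j = n + (m + j) by omega]
    exact hass
  have part3 : ∀ i ∈ gammaSet e s n I, ∀ j ∈ gammaSet e s m J, i + j ≤ e - 1 →
      i + j ∈ gammaSet e s (n + m) (I * J) := by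
    rintro i ⟨hi1, hi2, a, ha, hspa⟩ j ⟨hj1, hj2, b, hb, hspb⟩ hij
    have ha' := Ideal.span_singleton_eq_span_singleton.mp hspa
    have hb' := Ideal.span_singleton_eq_span_singleton.mp hspb
    obtain ⟨hmem, hass⟩ := mulmem a b (n + i) (m + j) ha hb ha' hb'
    refine ⟨by omega, by omega, a * b, hmem, ?_⟩
    rw [Ideal.span_singleton_eq_span_singleton]
    rw [show n + m + (i + j) = n + i + (m + j) by omega]
    exact hass
  refine ⟨part1, part2, part3, ?_⟩
  intro hγ
  -- e ≥ 1
  have hcomap : Ideal.comap f (IsLocalRing.maximalIdeal Rbar) = IsLocalRing.maximalIdeal R :=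
    IsLocalRing.eq_maximalIdeal
      (Ideal.isMaximal_comap_of_isIntegral_of_isMaximal (IsLocalRing.maximalIdeal Rbar))
  have hmle : Ideal.map f (IsLocalRing.maximalIdeal R) ≤ Ideal.span {s} := by
    rw [← hmax, Ideal.map_le_iff_le_comap, hcomap]
  have hepos : 0 < e := by
    by_contra h
    have he0 : e = 0 := by omega
    rw [he0, pow_zero, Ideal.span_singleton_one] at he
    rw [he] at hmle
    have : (1 : Rbar) ∈ Ideal.span {s} := hmle Submodule.mem_top
    rw [Ideal.mem_span_singleton] at this
    exact hs.not_isUnit (isUnit_of_dvd_one this)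
  have hK : Ideal.map f (I * J) = Ideal.span {s ^ (n + m)} := by
    rw [Ideal.map_mul, hIn, hJm, Ideal.span_singleton_mul_span_singleton, ← pow_add]
  have part4a : gammaSet e s (n + m) (I * J) = {i | 1 ≤ i ∧ i < e} := by
    ext k
    constructor
    · rintro ⟨h1, h2, -⟩; exact ⟨h1, h2⟩
    · rintro ⟨h1, h2⟩
      exact part1 (hγ ▸ (⟨h1, h2⟩ : k ∈ {i | 1 ≤ i ∧ i < e}))
  refine ⟨part4a, ?_⟩
  -- hard part: I*J = comap (map (I*J))
  obtain ⟨a0, ha0K, ha0⟩ := exists_assoc_of_map_eq s hs (I * J) (n + m) hK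
  obtain ⟨z, hzm, hz⟩ := exists_assoc_of_map_eq s hs (IsLocalRing.maximalIdeal R) e he
  have haK : ∀ i < e, ∃ a ∈ I * J, Associated (f a) (s ^ (n + m + i)) := by
    intro i hie
    rcases Nat.eq_zero_or_pos i with h0 | h1
    · subst h0; exact ⟨a0, ha0K, by simpa using ha0⟩
    · have hiγ : i ∈ gammaSet e s (n + m) (I * J) := part4a ▸ (⟨h1, hie⟩ : 1 ≤ i ∧ i < e)
      obtain ⟨-, -, a, ha, hsp⟩ := hiγ
      exact ⟨a, ha, Ideal.span_singleton_eq_span_singleton.mp hsp⟩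
  have hb : ∀ t : ℕ, ∃ b ∈ I * J, Associated (f b) (s ^ (n + m + t)) := by
    intro t
    obtain ⟨a, haK', ha⟩ := haK (t % e) (Nat.mod_lt t hepos)
    refine ⟨a * z ^ (t / e), Ideal.mul_mem_right _ _ haK', ?_⟩
    have ht : n + m + t = n + m + t % e + e * (t / e) := by
      have := Nat.mod_add_div t e; omega
    rw [map_mul, map_pow, ht, pow_add, pow_mul]
    exact ha.mul_mul hz.pow_pow
  have step : ∀ (t : ℕ) (x : R), f x ∈ Ideal.span {s ^ (n + m + t)} →
      ∃ k ∈ I * J, f (x - k) ∈ Ideal.span {s ^ (n + m + t + 1)} := by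
    intro t x hx
    obtain ⟨b, hbK, hba⟩ := hb t
    obtain ⟨w, hw⟩ := hba
    rw [Ideal.mem_span_singleton] at hx
    obtain ⟨u, hu⟩ := hx
    obtain ⟨c, hc⟩ := hres ((w : Rbar) * u)
    rw [hmax, Ideal.mem_span_singleton] at hc
    obtain ⟨d, hd⟩ := hc
    refine ⟨b * c, Ideal.mul_mem_right _ _ hbK, ?_⟩
    rw [Ideal.mem_span_singleton]
    have hfb : s ^ (n + m + t) * ((w⁻¹ : Rbarˣ) : Rbar) = f b := by
      rw [← hw, mul_assoc]
      simp
    have key : f (x - b * c) = f b * ((w : Rbar) * u - f c) := by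
      rw [map_sub, map_mul, hu, ← hw]; ring
    rw [key, hd, ← hfb]
    exact ⟨((w⁻¹ : Rbarˣ) : Rbar) * d, by rw [pow_succ]; ring⟩
  have iter : ∀ (t : ℕ) (x : R), f x ∈ Ideal.span {s ^ (n + m)} →
      ∃ k ∈ I * J, f (x - k) ∈ Ideal.span {s ^ (n + m + t)} := by
    intro t
    induction t with
    | zero => intro x hx; exact ⟨0, zero_mem _, by simpa using hx⟩
    | succ t ih =>
        intro x hx
        obtain ⟨k, hk, hk2⟩ := ih x hx
        obtain ⟨k', hk', hk'2⟩ := step t (x - k) hk2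
        exact ⟨k + k', add_mem hk hk', by rw [show x - (k + k') = x - k - k' by ring]; exact hk'2⟩
  -- Artin–Rees, transferred to a same-universe model of Rbar
  set R0 : Submodule R Rbar := (LinearMap.range (Algebra.linearMap R Rbar) : Submodule R Rbar)
    with hR0
  obtain ⟨kk, g, hg⟩ := Module.Finite.exists_fin (R := R) (M := Rbar)
  set π : (Fin kk → R) →ₗ[R] Rbar := Fintype.linearCombination R g with hπdef
  have hπs : Function.Surjective π := by
    rw [← LinearMap.range_eq_top, hπdef, Fintype.range_linearCombination]
    exact hg
  set σ : ((Fin kk → R) ⧸ LinearMap.ker π) ≃ₗ[R] Rbar := π.quotKerEquivOfSurjective hπs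
    with hσdef
  obtain ⟨c, hc⟩ := Ideal.exists_pow_inf_eq_pow_smul (IsLocalRing.maximalIdeal R)
    (Submodule.comap (σ : ((Fin kk → R) ⧸ LinearMap.ker π) →ₗ[R] Rbar) R0)
  have hmapinf : ∀ p : Ideal R,
      Submodule.map (σ : ((Fin kk → R) ⧸ LinearMap.ker π) →ₗ[R] Rbar)
        (p • ⊤ ⊓ Submodule.comap (σ : ((Fin kk → R) ⧸ LinearMap.ker π) →ₗ[R] Rbar) R0)
      = p • ⊤ ⊓ R0 := by
    intro p
    have hσinj : Function.Injective (σ : ((Fin kk → R) ⧸ LinearMap.ker π) →ₗ[R] Rbar) :=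
      σ.injective
    have hσsurj : Function.Surjective (σ : ((Fin kk → R) ⧸ LinearMap.ker π) →ₗ[R] Rbar) :=
      σ.surjective
    rw [Submodule.map_inf _ hσinj, Submodule.map_comap_eq_of_surjective hσsurj,
      Submodule.map_smul'', Submodule.map_top, LinearMap.range_eq_top.mpr hσsurj]
  have hcbar : ∀ u ≥ c, ((IsLocalRing.maximalIdeal R) ^ u • ⊤ ⊓ R0 : Submodule R Rbar) =
      (IsLocalRing.maximalIdeal R) ^ (u - c) •
        ((IsLocalRing.maximalIdeal R) ^ c • ⊤ ⊓ R0 : Submodule R Rbar) := by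
    intro u hu
    have h := congrArg
      (Submodule.map (σ : ((Fin kk → R) ⧸ LinearMap.ker π) →ₗ[R] Rbar)) (hc u hu)
    rwa [hmapinf, Submodule.map_smul'', hmapinf] at h
  have hAR : ∀ (v : ℕ) (y : R), f y ∈ Ideal.span {s ^ (e * (v + c))} →
      y ∈ (IsLocalRing.maximalIdeal R) ^ v := by
    intro v y hy
    have h1 : ((IsLocalRing.maximalIdeal R) ^ (v + c) • ⊤ : Submodule R Rbar) =
        Submodule.restrictScalars R (Ideal.span {s ^ (e * (v + c))}) := by
      rw [Ideal.smul_top_eq_map, Ideal.map_pow, he, Ideal.span_singleton_pow, ← pow_mul]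
    have h2 : f y ∈ ((IsLocalRing.maximalIdeal R) ^ (v + c) • ⊤ ⊓ R0 : Submodule R Rbar) := by
      refine Submodule.mem_inf.mpr ⟨?_, ⟨y, rfl⟩⟩
      rw [h1]; exact hy
    rw [hcbar (v + c) (le_add_self)] at h2
    have hvc : v + c - c = v := by omega
    rw [hvc] at h2
    have h3 : f y ∈ ((IsLocalRing.maximalIdeal R) ^ v • R0 : Submodule R Rbar) :=
      Submodule.smul_mono le_rfl inf_le_right h2
    rw [hR0, LinearMap.range_eq_map, ← Submodule.map_smul''] at h3
    obtain ⟨w, hwmem, hweq⟩ := h3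
    have hwy : w = y := hinj hweq
    subst hwy
    have hle : ((IsLocalRing.maximalIdeal R) ^ v • ⊤ : Submodule R R) ≤
        ((IsLocalRing.maximalIdeal R) ^ v : Ideal R) :=
      Submodule.smul_le.mpr (fun r hr x _ => by
        simpa [smul_eq_mul] using Ideal.mul_mem_right x _ hr)
    exact hle hwmem
  -- Krull intersection finish
  refine le_antisymm Ideal.le_comap_map ?_
  intro x hx
  rw [Ideal.mem_comap, hK] at hx
  have hbot : (⨅ v : ℕ, (IsLocalRing.maximalIdeal R) ^ v • ⊤ : Submodule R (R ⧸ (I * J))) = ⊥ :=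
    Ideal.iInf_pow_smul_eq_bot_of_isLocalRing _ (IsLocalRing.maximalIdeal.isMaximal R).ne_top
  have hxq : Ideal.Quotient.mk (I * J) x ∈
      (⨅ v : ℕ, (IsLocalRing.maximalIdeal R) ^ v • ⊤ : Submodule R (R ⧸ (I * J))) := by
    rw [Submodule.mem_iInf]
    intro v
    obtain ⟨k, hk, hk2⟩ := iter (e * (v + c)) x hx
    have h4 : f (x - k) ∈ Ideal.span {s ^ (e * (v + c))} :=
      Ideal.span_singleton_le_span_singleton.mpr (pow_dvd_pow s (by omega)) hk2
    have h5 : x - k ∈ (IsLocalRing.maximalIdeal R) ^ v := hAR v _ h4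
    have hmk : Ideal.Quotient.mk (I * J) x = (x - k) • (1 : R ⧸ (I * J)) := by
      have : Ideal.Quotient.mk (I * J) x = Ideal.Quotient.mk (I * J) (x - k) := by
        rw [map_sub, Ideal.Quotient.eq_zero_iff_mem.mpr hk, sub_zero]
      rw [this, Algebra.smul_def, mul_one, Ideal.Quotient.algebraMap_eq]
    rw [hmk]
    exact Submodule.smul_mem_smul h5 Submodule.mem_top
  rw [hbot, Submodule.mem_bot] at hxq
  exact Ideal.Quotient.eq_zero_iff_mem.mp hxq
end

section
/- Let F be a field, e ≥ 3, R = F[[s^e, s^{e+1}]] with conductor s^c R̄ where c = (e−1)e and R̄ = F[[s]]. Let g' = s^c + s^{c+1}t + ⋯ + s^{c+e-1}t^{e-1} ∈ R[t]. Then μ_R(g') = e = μ_R(c(g')); in particular, for f = s^c − s^{c+1}t, the smallest k with c(fg')·c(f)^{k-1} = c(f)^k·c(g') is k = e. -/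
open Polynomial
set_option synthInstance.maxHeartbeats 1000000

section DM
variable {S : Type*} [CommRing S]

lemma coeff_mem_cont (p : S[X]) (n : ℕ) : p.coeff n ∈ cont p :=
  Ideal.subset_span ⟨n, rfl⟩

lemma cont_le_iff {p : S[X]} {I : Ideal S} : cont p ≤ I ↔ ∀ n, p.coeff n ∈ I := by
  rw [cont, Ideal.span_le]
  constructor
  · intro h n; exact h ⟨n, rfl⟩
  · rintro h _ ⟨n, rfl⟩; exact h n

lemma cont_mul_le_s18 (p q : S[X]) : cont (p * q) ≤ cont p * cont q := by
  rw [cont_le_iff]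
  intro n
  rw [Polynomial.coeff_mul]
  exact Ideal.sum_mem _ fun c _ => Ideal.mul_mem_mul (coeff_mem_cont p c.1) (coeff_mem_cont q c.2)

lemma cont_erase_le (p : S[X]) (m : ℕ) : cont (p.erase m) ≤ cont p := by
  rw [cont_le_iff]
  intro n
  rw [Polynomial.coeff_erase]
  split
  · exact (cont p).zero_mem
  · exact coeff_mem_cont p n

lemma cont_le_singleton_add_erase (p : S[X]) (m : ℕ) :
    cont p ≤ Ideal.span {p.coeff m} + cont (p.erase m) := by
  rw [cont_le_iff]
  intro n
  by_cases h : n = m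
  · subst h
    exact Ideal.mem_sup_left (Ideal.mem_span_singleton_self _)
  · refine Ideal.mem_sup_right ?_
    have : (p.erase m).coeff n = p.coeff n := by
      rw [Polynomial.coeff_erase, if_neg h]
    rw [← this]
    exact coeff_mem_cont _ n

lemma cont_sub_le (p q : S[X]) : cont (p - q) ≤ cont p + cont q := by
  rw [cont_le_iff]
  intro n
  rw [Polynomial.coeff_sub]
  exact sub_mem (Ideal.mem_sup_left (coeff_mem_cont p n))
    (Ideal.mem_sup_right (coeff_mem_cont q n))

lemma cont_C_mul_le (a : S) (h : S[X]) : cont (C a * h) ≤ Ideal.span {a} * cont h := by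
  rw [cont_le_iff]
  intro n
  rw [Polynomial.coeff_C_mul]
  exact Ideal.mul_mem_mul (Ideal.mem_span_singleton_self a) (coeff_mem_cont h n)

lemma cont_X_pow_mul_le (m : ℕ) (g : S[X]) : cont (X ^ m * g) ≤ cont g := by
  rw [cont_le_iff]
  intro n
  rw [Polynomial.X_pow_mul, Polynomial.coeff_mul_X_pow']
  split
  · exact coeff_mem_cont g _
  · exact (cont g).zero_mem

lemma cont_mul_erase_le (f g : S[X]) (m : ℕ) :
    cont (f.erase m * g) ≤ cont (f * g) + Ideal.span {f.coeff m} * cont g := by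
  have hE : f.erase m * g = f * g - C (f.coeff m) * (X ^ m * g) := by
    have h := f.monomial_add_erase m
    have : f.erase m = f - C (f.coeff m) * X ^ m := by
      rw [Polynomial.C_mul_X_pow_eq_monomial]
      exact eq_sub_of_add_eq' h
    rw [this]; ring
  rw [hE]
  refine le_trans (cont_sub_le _ _) ?_
  refine sup_le_sup le_rfl ?_
  exact le_trans (cont_C_mul_le _ _) (Ideal.mul_mono le_rfl (cont_X_pow_mul_le m g))

lemma cont_erase_mul_le' (f g : S[X]) (n : ℕ) :
    cont (f * g.erase n) ≤ cont (f * g) + Ideal.span {g.coeff n} * cont f := by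
  rw [mul_comm f (g.erase n), mul_comm f g]
  exact cont_mul_erase_le g f n

lemma coeff_mul_top {m n : ℕ} {f g : S[X]} (hf : ∀ i, m < i → f.coeff i = 0)
    (hg : ∀ j, n < j → g.coeff j = 0) :
    (f * g).coeff (m + n) = f.coeff m * g.coeff n := by
  rw [Polynomial.coeff_mul]
  apply Finset.sum_eq_single (m, n)
  · rintro ⟨i, j⟩ hmem hne
    rw [Finset.HasAntidiagonal.mem_antidiagonal] at hmem
    rcases lt_trichotomy i m with h | h | h
    · have : n < j := by omega
      rw [hg j this, mul_zero]
    · exfalso; apply hne; simp only [h]; have : j = n := by omega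
      rw [this]
    · rw [hf i h, zero_mul]
  · intro h
    simp [Finset.HasAntidiagonal.mem_antidiagonal] at h

lemma add_pow_mul_le (I J : Ideal S) :
    ∀ (k : ℕ) (C D : Ideal S), (∀ j ≤ k, I ^ j * J ^ (k - j) * C ≤ D) → (I + J) ^ k * C ≤ D := by
  intro k
  induction k with
  | zero =>
    intro C D h
    have := h 0 le_rfl
    simpa using this
  | succ k ih =>
    intro C D h
    have hsplit : (I + J) ^ (k + 1) * C =
        I * ((I + J) ^ k * C) + J * ((I + J) ^ k * C) := by
      rw [pow_succ']
      ring
    rw [hsplit]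
    apply sup_le
    · rw [show I * ((I + J) ^ k * C) = (I + J) ^ k * (I * C) by ring]
      refine ih (I * C) D ?_
      intro j hj
      have h2 := h (j + 1) (by omega)
      refine le_trans (le_of_eq ?_) h2
      rw [Nat.succ_sub_succ]
      ring
    · rw [show J * ((I + J) ^ k * C) = (I + J) ^ k * (J * C) by ring]
      refine ih (J * C) D ?_
      intro j hj
      have h2 := h j (by omega)
      refine le_trans (le_of_eq ?_) h2
      have : k + 1 - j = (k - j) + 1 := by omega
      rw [this]
      ring
end DM

section DM2
set_option maxHeartbeats 1000000
variable {S : Type*} [CommRing S]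

lemma dm_of_aux (m : ℕ)
    (H : ∀ n j : ℕ, j ≤ n + 1 → ∀ f g : S[X], (∀ i, m < i → f.coeff i = 0) →
      (∀ i, n < i → g.coeff i = 0) →
      Ideal.span {f.coeff m ^ j} * cont (f.erase m) ^ (n + 1 - j) * cont g ≤
        cont f ^ n * cont (f * g)) :
    ∀ (n : ℕ) (f g : S[X]), (∀ i, m < i → f.coeff i = 0) → (∀ i, n < i → g.coeff i = 0) →
      cont f ^ (n + 1) * cont g ≤ cont f ^ n * cont (f * g) := by
  intro n f g hf hg
  have h1 : cont f ^ (n + 1) * cont g ≤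
      (Ideal.span {f.coeff m} + cont (f.erase m)) ^ (n + 1) * cont g :=
    Ideal.mul_mono (Ideal.pow_right_mono (cont_le_singleton_add_erase f m) _) le_rfl
  refine le_trans h1 (add_pow_mul_le _ _ (n + 1) (cont g) _ ?_)
  intro j hj
  rw [Ideal.span_singleton_pow]
  exact H n j hj f g hf hg

lemma dmAux : ∀ m ν n j : ℕ, 2 * n + (if j = 0 then 1 else 0) ≤ ν → j ≤ n + 1 →
    ∀ f g : S[X], (∀ i, m < i → f.coeff i = 0) → (∀ i, n < i → g.coeff i = 0) →
    Ideal.span {f.coeff m ^ j} * cont (f.erase m) ^ (n + 1 - j) * cont g ≤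
      cont f ^ n * cont (f * g) := by
  intro m
  induction m using Nat.strong_induction_on with
  | _ m ihm =>
  intro ν
  induction ν using Nat.strong_induction_on with
  | _ ν ihv =>
  intro n j hν hj f g hf hg
  have haf : f.coeff m ∈ cont f := coeff_mem_cont f m
  have herase : cont (f.erase m) ≤ cont f := cont_erase_le f m
  rcases Nat.eq_zero_or_pos j with hj0 | hjpos
  · -- case j = 0
    subst hj0
    have hnu : 2 * n + 1 ≤ ν := by simpa using hν
    rw [pow_zero, Ideal.span_singleton_one, Nat.sub_zero, Ideal.top_mul]
    rcases Nat.eq_zero_or_pos m with hm0 | hmpos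
    · subst hm0
      have hbot : cont (f.erase 0) ≤ ⊥ := by
        rw [cont_le_iff]
        intro i
        rw [Polynomial.coeff_erase]
        rw [Ideal.mem_bot]
        split
        · rfl
        · exact hf i (by omega)
      have : cont (f.erase 0) ^ (n + 1) * cont g ≤ ⊥ * cont g :=
        Ideal.mul_mono (le_trans (Ideal.pow_right_mono hbot _)
          (le_of_eq (by rw [← Ideal.zero_eq_bot, zero_pow (Nat.succ_ne_zero n)]))) le_rfl
      refine le_trans this (le_trans (le_of_eq (Ideal.bot_mul _)) bot_le)
    · obtain ⟨m', rfl⟩ : ∃ m', m = m' + 1 := ⟨m - 1, by omega⟩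
      have hf1 : ∀ i, m' < i → (f.erase (m' + 1)).coeff i = 0 := by
        intro i hi
        rw [Polynomial.coeff_erase]
        split
        · rfl
        · exact hf i (by omega)
      have hdm : cont (f.erase (m' + 1)) ^ (n + 1) * cont g ≤
          cont (f.erase (m' + 1)) ^ n * cont (f.erase (m' + 1) * g) :=
        dm_of_aux m' (fun n' j' hj' f' g' hf' hg' =>
          ihm m' (by omega) (2 * n' + 1) n' j'
            (by split <;> omega) hj' f' g' hf' hg') n (f.erase (m' + 1)) g hf1 hg
      have h2 : cont (f.erase (m' + 1) * g) ≤
          cont (f * g) + Ideal.span {f.coeff (m' + 1)} * cont g := cont_mul_erase_le f g (m' + 1)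
      have h3 : cont (f.erase (m' + 1)) ^ (n + 1) * cont g ≤
          cont (f.erase (m' + 1)) ^ n * cont (f * g) +
          Ideal.span {f.coeff (m' + 1) ^ 1} * cont (f.erase (m' + 1)) ^ (n + 1 - 1) * cont g := by
      -- chain through h2
        refine le_trans hdm ?_
        refine le_trans (Ideal.mul_mono le_rfl h2) ?_
        rw [mul_add, pow_one, Nat.add_sub_cancel]
        refine sup_le_sup le_rfl (le_of_eq (by ring))
      refine le_trans h3 (sup_le ?_ ?_)
      · exact Ideal.mul_mono (Ideal.pow_right_mono herase n) le_rfl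
      · exact ihv (2 * n) (by omega) n 1 (by simp) (by omega) f g hf hg
  · -- case j ≥ 1
    obtain ⟨j', rfl⟩ : ∃ j', j = j' + 1 := ⟨j - 1, by omega⟩
    rcases Nat.eq_zero_or_pos n with hn0 | hnpos
    · -- n = 0, j = 1
      subst hn0
      have hj1 : j' = 0 := by omega
      subst hj1
      rw [pow_one, Nat.sub_self, pow_zero, mul_one, pow_zero, one_mul]
      rw [cont, Ideal.span_mul_span']
      rw [Ideal.span_le]
      rintro x hx
      rw [Set.mem_mul] at hx
      obtain ⟨u, hu, v, hv, rfl⟩ := hx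
      rw [Set.mem_singleton_iff] at hu
      subst hu
      obtain ⟨i, rfl⟩ := hv
      rcases Nat.eq_zero_or_pos i with hi0 | hipos
      · subst hi0
        have : (f * g).coeff (m + 0) = f.coeff m * g.coeff 0 := coeff_mul_top hf hg
        rw [← this]
        exact coeff_mem_cont _ _
      · rw [hg i (by omega), mul_zero]
        exact (cont (f * g)).zero_mem
    · obtain ⟨n', rfl⟩ : ∃ n', n = n' + 1 := ⟨n - 1, by omega⟩
      have hg1 : ∀ i, n' < i → (g.erase (n' + 1)).coeff i = 0 := by
        intro i hi
        rw [Polynomial.coeff_erase]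
        split
        · rfl
        · exact hg i (by omega)
      have hab : f.coeff m * g.coeff (n' + 1) ∈ cont (f * g) := by
        have : (f * g).coeff (m + (n' + 1)) = f.coeff m * g.coeff (n' + 1) :=
          coeff_mul_top hf hg
        rw [← this]; exact coeff_mem_cont _ _
      have hsplitg : cont g ≤ Ideal.span {g.coeff (n' + 1)} + cont (g.erase (n' + 1)) :=
        cont_le_singleton_add_erase g (n' + 1)
      have hLHS : Ideal.span {f.coeff m ^ (j' + 1)} * cont (f.erase m) ^ (n' + 1 + 1 - (j' + 1)) *
            cont g ≤
          Ideal.span {f.coeff m ^ (j' + 1)} * cont (f.erase m) ^ (n' + 1 - j') *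
            Ideal.span {g.coeff (n' + 1)} +
          Ideal.span {f.coeff m ^ (j' + 1)} * cont (f.erase m) ^ (n' + 1 - j') *
            cont (g.erase (n' + 1)) := by
        have hexp : n' + 1 + 1 - (j' + 1) = n' + 1 - j' := by omega
        rw [hexp]
        refine le_trans (Ideal.mul_mono le_rfl hsplitg) (le_of_eq (mul_add _ _ _))
      refine le_trans hLHS (sup_le ?_ ?_)
      · -- T1
        have e1 : Ideal.span {f.coeff m ^ (j' + 1)} * cont (f.erase m) ^ (n' + 1 - j') *
            Ideal.span {g.coeff (n' + 1)} =
            (Ideal.span {f.coeff m ^ (j' + 1)} * Ideal.span {g.coeff (n' + 1)}) *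
              cont (f.erase m) ^ (n' + 1 - j') := by ring
        rw [e1, Ideal.span_singleton_mul_span_singleton]
        have e2 : f.coeff m ^ (j' + 1) * g.coeff (n' + 1) =
            f.coeff m ^ j' * (f.coeff m * g.coeff (n' + 1)) := by ring
        have hm1 : Ideal.span {f.coeff m ^ (j' + 1) * g.coeff (n' + 1)} ≤
            cont f ^ j' * cont (f * g) := by
          rw [Ideal.span_le, Set.singleton_subset_iff, e2]
          exact Ideal.mul_mem_mul (Ideal.pow_mem_pow haf j') hab
        refine le_trans (Ideal.mul_mono hm1 (Ideal.pow_right_mono herase _)) ?_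
        have e3 : cont f ^ j' * cont (f * g) * cont f ^ (n' + 1 - j') =
            (cont f ^ j' * cont f ^ (n' + 1 - j')) * cont (f * g) := by ring
        rw [e3, ← pow_add]
        have e4 : j' + (n' + 1 - j') = n' + 1 := by omega
        rw [e4]
      · -- T2
        have hrec : Ideal.span {f.coeff m ^ j'} * cont (f.erase m) ^ (n' + 1 - j') *
            cont (g.erase (n' + 1)) ≤ cont f ^ n' * cont (f * g.erase (n' + 1)) :=
          ihv (2 * n' + (if j' = 0 then 1 else 0)) (by split <;> omega) n' j' le_rfl
            (by omega) f (g.erase (n' + 1)) hf hg1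
        have e5 : Ideal.span {f.coeff m ^ (j' + 1)} * cont (f.erase m) ^ (n' + 1 - j') *
            cont (g.erase (n' + 1)) =
            Ideal.span {f.coeff m} * (Ideal.span {f.coeff m ^ j'} *
              cont (f.erase m) ^ (n' + 1 - j') * cont (g.erase (n' + 1))) := by
          rw [show f.coeff m ^ (j' + 1) = f.coeff m * f.coeff m ^ j' by ring,
            ← Ideal.span_singleton_mul_span_singleton]
          ring
        rw [e5]
        refine le_trans (Ideal.mul_mono le_rfl hrec) ?_
        have hfg1 : cont (f * g.erase (n' + 1)) ≤
            cont (f * g) + Ideal.span {g.coeff (n' + 1)} * cont f :=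
          cont_erase_mul_le' f g (n' + 1)
        refine le_trans (Ideal.mul_mono le_rfl (Ideal.mul_mono le_rfl hfg1)) ?_
        rw [mul_add, mul_add]
        refine sup_le ?_ ?_
        · have ha1 : Ideal.span {f.coeff m} ≤ cont f := by
            rw [Ideal.span_le, Set.singleton_subset_iff]; exact haf
          have : Ideal.span {f.coeff m} * (cont f ^ n' * cont (f * g)) ≤
              cont f * (cont f ^ n' * cont (f * g)) := Ideal.mul_mono ha1 le_rfl
          refine le_trans this (le_of_eq (by ring))
        · have e6 : Ideal.span {f.coeff m} * (cont f ^ n' *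
              (Ideal.span {g.coeff (n' + 1)} * cont f)) =
              (Ideal.span {f.coeff m} * Ideal.span {g.coeff (n' + 1)}) *
                (cont f ^ n' * cont f) := by ring
          rw [e6, Ideal.span_singleton_mul_span_singleton]
          have hm2 : Ideal.span {f.coeff m * g.coeff (n' + 1)} ≤ cont (f * g) := by
            rw [Ideal.span_le, Set.singleton_subset_iff]; exact hab
          refine le_trans (Ideal.mul_mono hm2 le_rfl) (le_of_eq ?_)
          rw [← pow_succ]
          ring

theorem dedekind_mertens (n : ℕ) (f g : S[X]) (hg : ∀ i, n < i → g.coeff i = 0) :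
    cont (f * g) * cont f ^ n = cont f ^ (n + 1) * cont g := by
  apply le_antisymm
  · refine le_trans (Ideal.mul_mono (cont_mul_le_s18 f g) le_rfl) (le_of_eq (by ring))
  · have h := dm_of_aux f.natDegree
      (fun n' j hj f' g' hf' hg' =>
        dmAux f.natDegree (2 * n' + 1) n' j (by split <;> omega) hj f' g' hf' hg')
      n f g (fun i hi => Polynomial.coeff_eq_zero_of_natDegree_lt hi) hg
    exact le_trans h (le_of_eq (by ring))

end DM2

section SuppIdeal
set_option maxHeartbeats 1000000

variable {F : Type*} [Field F] {e : ℕ} {R : Subring (PowerSeries F)}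

/-- Ideal of elements of `R` supported in a set `V` of exponents. -/
noncomputable def suppIdeal
    (hR : ∀ r : ↥R, ∀ n, PowerSeries.coeff n (r : PowerSeries F) ≠ 0 → n = 0 ∨ e ≤ n)
    (V : ℕ → Prop) (hV : ∀ n, V n → ∀ u, e ≤ u → V (n + u)) : Ideal ↥R where
  carrier := {x | ∀ n, ¬ V n → PowerSeries.coeff n (x : PowerSeries F) = 0}
  add_mem' := by
    intro x y hx hy n hn
    have : ((x + y : ↥R) : PowerSeries F) = (x : PowerSeries F) + y := rfl
    rw [this, map_add, hx n hn, hy n hn, add_zero]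
  zero_mem' := by
    intro n hn
    simp
  smul_mem' := by
    intro r x hx n hn
    have : ((r • x : ↥R) : PowerSeries F) = (r : PowerSeries F) * x := rfl
    rw [this, PowerSeries.coeff_mul]
    apply Finset.sum_eq_zero
    rintro ⟨u, v⟩ hmem
    rw [Finset.HasAntidiagonal.mem_antidiagonal] at hmem
    by_cases hv : V v
    · by_cases hu : PowerSeries.coeff u (r : PowerSeries F) = 0
      · rw [hu, zero_mul]
      · exfalso
        apply hn
        rcases hR r u hu with h0 | hE
        · rw [← hmem, h0, zero_add]; exact hv
        · rw [← hmem, add_comm]; exact hV v hv u hE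
    · rw [hx v hv, mul_zero]

lemma mem_suppIdeal_iff
    (hR : ∀ r : ↥R, ∀ n, PowerSeries.coeff n (r : PowerSeries F) ≠ 0 → n = 0 ∨ e ≤ n)
    (V : ℕ → Prop) (hV : ∀ n, V n → ∀ u, e ≤ u → V (n + u)) (x : ↥R) :
    x ∈ suppIdeal hR V hV ↔ ∀ n, ¬ V n → PowerSeries.coeff n (x : PowerSeries F) = 0 :=
  Iff.rfl

lemma suppIdeal_mono
    (hR : ∀ r : ↥R, ∀ n, PowerSeries.coeff n (r : PowerSeries F) ≠ 0 → n = 0 ∨ e ≤ n)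
    (V₁ V₂ : ℕ → Prop) (hV₁ : ∀ n, V₁ n → ∀ u, e ≤ u → V₁ (n + u))
    (hV₂ : ∀ n, V₂ n → ∀ u, e ≤ u → V₂ (n + u)) (h : ∀ n, V₁ n → V₂ n) :
    suppIdeal hR V₁ hV₁ ≤ suppIdeal hR V₂ hV₂ := by
  intro x hx n hn
  exact hx n (fun h1 => hn (h n h1))

lemma suppIdeal_mul_le
    (hR : ∀ r : ↥R, ∀ n, PowerSeries.coeff n (r : PowerSeries F) ≠ 0 → n = 0 ∨ e ≤ n)
    (V₁ V₂ V₃ : ℕ → Prop) (hV₁ : ∀ n, V₁ n → ∀ u, e ≤ u → V₁ (n + u))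
    (hV₂ : ∀ n, V₂ n → ∀ u, e ≤ u → V₂ (n + u)) (hV₃ : ∀ n, V₃ n → ∀ u, e ≤ u → V₃ (n + u))
    (h : ∀ n₁ n₂, V₁ n₁ → V₂ n₂ → V₃ (n₁ + n₂)) :
    suppIdeal hR V₁ hV₁ * suppIdeal hR V₂ hV₂ ≤ suppIdeal hR V₃ hV₃ := by
  rw [Ideal.mul_le]
  intro r hr s hs n hn
  rw [mem_suppIdeal_iff] at hr hs
  show PowerSeries.coeff n ((r * s : ↥R) : PowerSeries F) = 0
  have : ((r * s : ↥R) : PowerSeries F) = (r : PowerSeries F) * s := rfl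
  rw [this, PowerSeries.coeff_mul]
  apply Finset.sum_eq_zero
  rintro ⟨u, v⟩ hmem
  rw [Finset.HasAntidiagonal.mem_antidiagonal] at hmem
  by_cases hu : V₁ u
  · by_cases hv : V₂ v
    · exact absurd (hmem ▸ h u v hu hv) hn
    · rw [hs v hv, mul_zero]
  · rw [hr u hu, zero_mul]

end SuppIdeal

set_option maxHeartbeats 4000000 in
/-- General Example 5.4, first part: let `e ≥ 3`, `R = F[[s^e, s^{e+1}]]` (power series
supported on the numerical semigroup `⟨e, e+1⟩`), with conductor exponent `c = (e-1)e`,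
and `g' = s^c + s^{c+1}t + ⋯ + s^{c+e-1}t^{e-1}`.  Then `μ_R(g') = e = μ_R(c(g'))`; in
particular for `f = s^c - s^{c+1}t` the least `k` with `c(fg')c(f)^{k-1} = c(f)^k c(g')`
is `k = e`. -/
theorem general_example_5_4 {F : Type*} [Field F] (e : ℕ) (he : 3 ≤ e)
    (R : Subring (PowerSeries F))
    (hR : ∀ f : PowerSeries F, f ∈ R ↔
      ∀ n : ℕ, (∀ a b : ℕ, n ≠ a * e + b * (e + 1)) → PowerSeries.coeff n f = 0)
    (a : ℕ → ↥R) (ha : ∀ k, (e - 1) * e ≤ k → (a k : PowerSeries F) = PowerSeries.X ^ k)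
    (g' f : Polynomial ↥R)
    (hg' : g' = ∑ i ∈ Finset.range e, Polynomial.C (a ((e - 1) * e + i)) * Polynomial.X ^ i)
    (hf : f = Polynomial.C (a ((e - 1) * e)) - Polynomial.C (a ((e - 1) * e + 1)) * Polynomial.X) :
    dmNumber ↥R g' = e ∧
    mug (cont g') = e ∧
    sInf {k : ℕ | 0 < k ∧ cont (f * g') * cont f ^ (k - 1) = cont f ^ k * cont g'} = e := by
  obtain ⟨d, rfl⟩ : ∃ d, e = d + 3 := ⟨e - 3, by omega⟩
  clear he
  set c : ℕ := (d + 3 - 1) * (d + 3) with hcdef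
  -- basic coefficient vanishing in R
  have hsemi : ∀ (r : ↥R) (u : ℕ), 0 < u → u < d + 3 →
      PowerSeries.coeff u (r : PowerSeries F) = 0 := by
    intro r u h1 h2
    refine (hR (r : PowerSeries F)).1 r.2 u ?_
    intro α β heq
    rcases Nat.eq_zero_or_pos α with hα | hα
    · rcases Nat.eq_zero_or_pos β with hβ | hβ
      · subst hα; subst hβ; simp at heq; omega
      · have hB : d + 3 + 1 ≤ β * (d + 3 + 1) := Nat.le_mul_of_pos_left _ hβ
        omega
    · have hA : d + 3 ≤ α * (d + 3) := Nat.le_mul_of_pos_left _ hα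
      omega
  have hRcoeff : ∀ r : ↥R, ∀ n, PowerSeries.coeff n (r : PowerSeries F) ≠ 0 →
      n = 0 ∨ d + 3 ≤ n := by
    intro r n h
    by_contra hcon
    push_neg at hcon
    exact h (hsemi r n (by omega) (by omega))
  -- coefficients of g' and f
  have hg'coeff : ∀ k, g'.coeff k = if k < d + 3 then a (c + k) else 0 := by
    intro k
    rw [hg', Polynomial.finset_sum_coeff]
    simp only [Polynomial.coeff_C_mul, Polynomial.coeff_X_pow, mul_ite, mul_one, mul_zero]
    rw [Finset.sum_ite_eq (Finset.range (d + 3)) k (fun i => a (c + i))]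
    simp [Finset.mem_range]
  have hfcoeff : ∀ k, f.coeff k = if k = 0 then a c else if k = 1 then - a (c + 1) else 0 := by
    intro k
    rw [hf]
    rcases k with _ | _ | k <;>
      simp [Polynomial.coeff_sub, Polynomial.coeff_C, Polynomial.coeff_C_mul, Polynomial.coeff_X]
  -- support ideals
  have hVf : ∀ n, (n = c ∨ n = c + 1 ∨ c + (d + 3) ≤ n) → ∀ u, d + 3 ≤ u →
      (n + u = c ∨ n + u = c + 1 ∨ c + (d + 3) ≤ n + u) := by intro n h u hu; omega
  have hVc : ∀ n, c ≤ n → ∀ u, d + 3 ≤ u → c ≤ n + u := by intro n h u hu; omega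
  have hVh : ∀ n, (n = 2 * c ∨ 2 * c + (d + 3) ≤ n) → ∀ u, d + 3 ≤ u →
      (n + u = 2 * c ∨ 2 * c + (d + 3) ≤ n + u) := by intro n h u hu; omega
  have hW : ∀ t n, (∃ p q, n = (2 + t) * c + p + q ∧ (p = 0 ∨ d + 3 ≤ p) ∧
      (q ≤ t ∨ d + 3 ≤ q)) → ∀ u, d + 3 ≤ u →
      (∃ p q, n + u = (2 + t) * c + p + q ∧ (p = 0 ∨ d + 3 ≤ p) ∧ (q + u ≤ t ∨ d + 3 ≤ q + u) → True) := by
    intro t n h u hu; exact ⟨0, 0, fun _ => trivial⟩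
  -- real closure statement for W
  have hWc : ∀ t, ∀ n, (∃ p q, n = (2 + t) * c + p + q ∧ (p = 0 ∨ d + 3 ≤ p) ∧
      (q ≤ t ∨ d + 3 ≤ q)) → ∀ u, d + 3 ≤ u →
      (∃ p q, n + u = (2 + t) * c + p + q ∧ (p = 0 ∨ d + 3 ≤ p) ∧ (q ≤ t ∨ d + 3 ≤ q)) := by
    rintro t n ⟨p, q, h1, h2, h3⟩ u hu
    exact ⟨p, q + u, by omega, h2, by omega⟩
  set If : Ideal ↥R := suppIdeal hRcoeff (fun n => n = c ∨ n = c + 1 ∨ c + (d + 3) ≤ n) hVf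
    with hIf
  set Ih : Ideal ↥R := suppIdeal hRcoeff (fun n => n = 2 * c ∨ 2 * c + (d + 3) ≤ n) hVh with hIh
  set IW : ℕ → Ideal ↥R := fun t => suppIdeal hRcoeff
    (fun n => ∃ p q, n = (2 + t) * c + p + q ∧ (p = 0 ∨ d + 3 ≤ p) ∧ (q ≤ t ∨ d + 3 ≤ q))
    (hWc t) with hIW
  set Ic : Ideal ↥R := suppIdeal hRcoeff (fun n => c ≤ n) hVc with hIc
  -- cont f ≤ If
  have hcontf : cont f ≤ If := by
    rw [cont_le_iff]
    intro k
    rw [hIf, mem_suppIdeal_iff]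
    intro n hn
    rw [hfcoeff]
    rcases k with _ | _ | k
    · rw [show (if (0:ℕ) = 0 then a c else if (0:ℕ) = 1 then - a (c + 1) else 0) = a c from rfl]
      rw [ha c le_rfl, PowerSeries.coeff_X_pow, if_neg (by tauto)]
    · rw [show (if (1:ℕ) = 0 then a c else if (1:ℕ) = 1 then - a (c + 1) else 0) = - a (c + 1)
        from rfl]
      have hthis : ((- a (c + 1) : ↥R) : PowerSeries F) = - ((a (c + 1) : ↥R) : PowerSeries F) :=
        rfl
      rw [hthis, map_neg, ha (c + 1) (by omega), PowerSeries.coeff_X_pow,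
        if_neg (by tauto), neg_zero]
    · rw [show (if k + 2 = 0 then a c else if k + 2 = 1 then - a (c + 1) else 0) = 0 from rfl]
      simp
  -- cont g' ≤ Ic
  have hcontg' : cont g' ≤ Ic := by
    rw [cont_le_iff]
    intro k
    rw [hIc, mem_suppIdeal_iff]
    intro n hn
    rw [hg'coeff]
    split
    · rw [ha (c + k) (by omega), PowerSeries.coeff_X_pow, if_neg (by omega)]
    · simp
  -- cont (f * g') ≤ Ih
  have hcontfg : cont (f * g') ≤ Ih := by
    have hfg : f * g' = Polynomial.C (a c) * g' -
        Polynomial.C (a (c + 1)) * (Polynomial.X * g') := by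
      rw [hf]; ring
    rw [cont_le_iff]
    intro k
    rw [hIh, mem_suppIdeal_iff]
    intro n hn
    rw [hfg, Polynomial.coeff_sub, Polynomial.coeff_C_mul, Polynomial.coeff_C_mul]
    rcases k with _ | k
    · rw [Polynomial.mul_coeff_zero, Polynomial.coeff_X_zero, zero_mul, mul_zero, sub_zero,
        hg'coeff, if_pos (by omega), add_zero]
      have : ((a c * a c : ↥R) : PowerSeries F) =
          ((a c : ↥R) : PowerSeries F) * ((a c : ↥R) : PowerSeries F) := rfl
      rw [this, ha c le_rfl, ← pow_add, PowerSeries.coeff_X_pow, if_neg (by omega)]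
    · rw [Polynomial.coeff_X_mul, hg'coeff, hg'coeff]
      by_cases h1 : k + 1 < d + 3
      · rw [if_pos h1, if_pos (by omega)]
        have : ((a c * a (c + (k + 1)) - a (c + 1) * a (c + k) : ↥R) : PowerSeries F) =
            ((a c : ↥R) : PowerSeries F) * ((a (c + (k + 1)) : ↥R) : PowerSeries F) -
            ((a (c + 1) : ↥R) : PowerSeries F) * ((a (c + k) : ↥R) : PowerSeries F) := rfl
        rw [this, ha c le_rfl, ha (c + (k + 1)) (by omega), ha (c + 1) (by omega),
          ha (c + k) (by omega), ← pow_add, ← pow_add,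
          show c + (c + (k + 1)) = c + 1 + (c + k) by omega, sub_self, map_zero]
      · by_cases h2 : k < d + 3
        · rw [if_neg h1, if_pos h2, mul_zero, zero_sub]
          have : ((- (a (c + 1) * a (c + k)) : ↥R) : PowerSeries F) =
              - (((a (c + 1) : ↥R) : PowerSeries F) * ((a (c + k) : ↥R) : PowerSeries F)) := rfl
          rw [this, ha (c + 1) (by omega), ha (c + k) (by omega), ← pow_add, map_neg,
            PowerSeries.coeff_X_pow, if_neg (by omega), neg_zero]
        · rw [if_neg h1, if_neg h2, mul_zero, mul_zero, sub_zero]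
          simp
  -- the chain
  have hchain : ∀ t, cont (f * g') * cont f ^ t ≤ IW t := by
    intro t
    induction t with
    | zero =>
      rw [pow_zero, mul_one]
      refine le_trans hcontfg ?_
      rw [hIh, hIW]
      refine suppIdeal_mono _ _ _ _ _ ?_
      intro n hn
      have hb : (2 + 0) * c = 2 * c := by ring
      rcases hn with h | h
      · exact ⟨0, 0, by omega, Or.inl rfl, Or.inl (by omega)⟩
      · exact ⟨n - 2 * c, 0, by omega, Or.inr (by omega), Or.inl (by omega)⟩
    | succ t iht =>
      rw [pow_succ, ← mul_assoc]
      refine le_trans (Ideal.mul_mono iht hcontf) ?_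
      rw [hIW, hIf]
      refine suppIdeal_mul_le _ _ _ _ _ _ _ ?_
      rintro n₁ n₂ ⟨p, q, h1, hp, hq⟩ h2
      have hb : (2 + (t + 1)) * c = (2 + t) * c + c := by ring
      refine ⟨p, q + (n₂ - c), by omega, hp, by omega⟩
  -- the witness element
  set N : ℕ := c * (d + 1) + (c + 1) + (c + (d + 1)) with hN
  have hNW : ¬ (∃ p q, N = (2 + (d + 1)) * c + p + q ∧ (p = 0 ∨ d + 3 ≤ p) ∧
      (q ≤ d + 1 ∨ d + 3 ≤ q)) := by
    rintro ⟨p, q, h1, hp, hq⟩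
    have hb : (2 + (d + 1)) * c = c * (d + 1) + c + c := by ring
    omega
  have hz1 : a c ∈ cont f := by
    have h0 : f.coeff 0 = a c := by rw [hfcoeff]; rfl
    exact h0 ▸ coeff_mem_cont f 0
  have hz2 : a (c + 1) ∈ cont f := by
    have h1 : f.coeff 1 = - a (c + 1) := by rw [hfcoeff]; rfl
    have := neg_mem (coeff_mem_cont f 1)
    rwa [h1, neg_neg] at this
  have hz3 : a (c + (d + 1)) ∈ cont g' := by
    have h1 : g'.coeff (d + 1) = a (c + (d + 1)) := by
      rw [hg'coeff, if_pos (by omega)]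
    exact h1 ▸ coeff_mem_cont g' (d + 1)
  set z : ↥R := a c ^ (d + 1) * a (c + 1) * a (c + (d + 1)) with hz
  have hzmem : z ∈ cont f ^ (d + 2) * cont g' := by
    refine Ideal.mul_mem_mul ?_ hz3
    rw [pow_succ]
    exact Ideal.mul_mem_mul (Ideal.pow_mem_pow hz1 (d + 1)) hz2
  have hzcoe : (z : PowerSeries F) = PowerSeries.X ^ N := by
    have : (z : PowerSeries F) = ((a c : ↥R) : PowerSeries F) ^ (d + 1) *
        ((a (c + 1) : ↥R) : PowerSeries F) * ((a (c + (d + 1)) : ↥R) : PowerSeries F) := by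
      rw [hz]; push_cast; ring
    rw [this, ha c le_rfl, ha (c + 1) (by omega), ha (c + (d + 1)) (by omega),
      ← pow_mul, ← pow_add, ← pow_add, hN]
  have hkey : cont (f * g') * cont f ^ (d + 1) ≠ cont f ^ (d + 2) * cont g' := by
    intro heq
    rw [← heq] at hzmem
    have hzW := hchain (d + 1) hzmem
    rw [hIW, mem_suppIdeal_iff] at hzW
    have h0 := hzW N hNW
    rw [hzcoe, PowerSeries.coeff_X_pow, if_pos rfl] at h0
    exact one_ne_zero h0
  -- Dedekind--Mertens
  have hgdeg : ∀ i, d + 2 < i → g'.coeff i = 0 := by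
    intro i hi
    rw [hg'coeff, if_neg (by omega)]
  have hDM : ∀ p : Polynomial ↥R,
      cont (p * g') * cont p ^ (d + 2) = cont p ^ (d + 3) * cont g' := by
    intro p
    exact dedekind_mertens (d + 2) p g' hgdeg
  -- upward closedness helper
  have hup : ∀ (p : Polynomial ↥R) (k : ℕ), 0 < k →
      cont (p * g') * cont p ^ (k - 1) = cont p ^ k * cont g' →
      cont (p * g') * cont p ^ (k + 1 - 1) = cont p ^ (k + 1) * cont g' := by
    intro p k hk h
    have e1 : k + 1 - 1 = (k - 1) + 1 := by omega
    rw [e1, pow_succ, pow_succ, ← mul_assoc, h]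
    ring
  refine ⟨?_, ?_, ?_⟩
  · -- dmNumber
    have hmemT : (d + 3) ∈ {k | 0 < k ∧ ∀ p : Polynomial ↥R,
        cont (p * g') * cont p ^ (k - 1) = cont p ^ k * cont g'} := by
      refine ⟨by omega, fun p => ?_⟩
      rw [show d + 3 - 1 = d + 2 by omega]
      exact hDM p
    have hmono : ∀ k l, k ≤ l → (k ∈ {k | 0 < k ∧ ∀ p : Polynomial ↥R,
        cont (p * g') * cont p ^ (k - 1) = cont p ^ k * cont g'}) → l ∈ {k | 0 < k ∧
        ∀ p : Polynomial ↥R, cont (p * g') * cont p ^ (k - 1) = cont p ^ k * cont g'} := by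
      intro k l hkl
      induction l, hkl using Nat.le_induction with
      | base => exact id
      | succ l hl ih =>
        intro hk
        obtain ⟨hpos, hres⟩ := ih hk
        exact ⟨by omega, fun p => hup p l hpos (hres p)⟩
    rw [dmNumber]
    refine le_antisymm (Nat.sInf_le hmemT) (le_csInf ⟨_, hmemT⟩ ?_)
    intro k hk
    by_contra hlt
    push_neg at hlt
    have h2 := hmono k (d + 2) (by omega) hk
    have h3 := h2.2 f
    rw [show d + 2 - 1 = d + 1 by omega] at h3
    exact hkey h3
  · -- mug
    have hgen : Ideal.span (Set.range (fun i : Fin (d + 3) => a (c + i.val))) = cont g' := by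
      apply le_antisymm
      · rw [Ideal.span_le]
        rintro y ⟨i, hi⟩
        have h1 : y = g'.coeff i.val := by rw [← hi, hg'coeff, if_pos i.isLt]
        rw [h1]
        exact coeff_mem_cont g' i.val
      · rw [cont_le_iff]
        intro k
        by_cases hk : k < d + 3
        · have h1 : g'.coeff k = a (c + k) := by rw [hg'coeff, if_pos hk]
          rw [h1]
          exact Ideal.subset_span ⟨⟨k, hk⟩, rfl⟩
        · rw [hg'coeff, if_neg hk]
          exact Ideal.zero_mem _
    rw [mug]
    refine le_antisymm (Nat.sInf_le ⟨_, hgen⟩) (le_csInf ⟨_, ⟨_, hgen⟩⟩ ?_)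
    rintro n ⟨x, hxspan⟩
    by_contra hlt
    push_neg at hlt
    -- the additive "leading coefficients" map
    set v : ↥R →+ (Fin (d + 3) → F) := AddMonoidHom.mk'
      (fun y i => PowerSeries.coeff (c + i.val) (y : PowerSeries F)) (by
        intro y z
        funext i
        have : ((y + z : ↥R) : PowerSeries F) = (y : PowerSeries F) + z := rfl
        simp [this]) with hv
    have hv_apply : ∀ (y : ↥R) (i : Fin (d + 3)),
        v y i = PowerSeries.coeff (c + i.val) (y : PowerSeries F) := fun y i => rfl
    have hsupp : ∀ y : ↥R, y ∈ cont g' → ∀ u, u < c → PowerSeries.coeff u (y : PowerSeries F) = 0 := by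
      intro y hy u hu
      have := hcontg' hy
      rw [hIc, mem_suppIdeal_iff] at this
      exact this u (by omega)
    have hsm : ∀ (r y : ↥R), (∀ u, u < c → PowerSeries.coeff u (y : PowerSeries F) = 0) →
        v (r * y) = PowerSeries.coeff 0 (r : PowerSeries F) • v y := by
      intro r y hy
      funext i
      rw [hv_apply, Pi.smul_apply, hv_apply, smul_eq_mul]
      have hco : ((r * y : ↥R) : PowerSeries F) = (r : PowerSeries F) * y := rfl
      rw [hco, PowerSeries.coeff_mul]
      apply Finset.sum_eq_single (0, c + i.val)
      · rintro ⟨u, w⟩ hmem hne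
        rw [Finset.HasAntidiagonal.mem_antidiagonal] at hmem
        rcases Nat.eq_zero_or_pos u with hu | hu
        · exfalso; apply hne; subst hu; simp at hmem; rw [hmem]
        · by_cases hw : w < c
          · rw [hy w hw, mul_zero]
          · have hi : i.val < d + 3 := i.isLt
            rw [hsemi r u hu (by omega), zero_mul]
      · intro hnot
        exfalso
        exact hnot (Finset.HasAntidiagonal.mem_antidiagonal.2 (by omega))
    have hsingle : ∀ i : Fin (d + 3), (Pi.single i (1 : F)) ∈
        Submodule.span F (Set.range (fun j => v (x j))) := by
      intro i
      have hgi : a (c + i.val) ∈ Ideal.span (Set.range x) := by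
        rw [hxspan]
        have h1 : g'.coeff i.val = a (c + i.val) := by rw [hg'coeff, if_pos i.isLt]
        exact h1 ▸ coeff_mem_cont g' i.val
      have hgi' : a (c + i.val) ∈ Submodule.span ↥R (Set.range x) := hgi
      rw [Submodule.mem_span_range_iff_exists_fun] at hgi'
      obtain ⟨r, hr⟩ := hgi'
      have hva : v (a (c + i.val)) = Pi.single i 1 := by
        funext i'
        rw [hv_apply, ha (c + i.val) (by omega), PowerSeries.coeff_X_pow]
        by_cases h : i' = i
        · subst h; rw [if_pos rfl, Pi.single_eq_same]
        · rw [Pi.single_eq_of_ne h, if_neg (fun hh => h (Fin.ext (by omega)))]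
      rw [← hva, ← hr, map_sum]
      apply Submodule.sum_mem
      intro j _
      have hxj : x j ∈ cont g' := by
        rw [← hxspan]
        exact Ideal.subset_span ⟨j, rfl⟩
      rw [smul_eq_mul, hsm (r j) (x j) (hsupp (x j) hxj)]
      exact Submodule.smul_mem _ _ (Submodule.subset_span ⟨j, rfl⟩)
    have htop : Submodule.span F (Set.range (fun j => v (x j))) = ⊤ := by
      rw [eq_top_iff, ← (Pi.basisFun F (Fin (d + 3))).span_eq, Submodule.span_le]
      rintro _ ⟨i, rfl⟩
      rw [Pi.basisFun_apply]
      exact hsingle i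
    have h1 : Module.finrank F (Fin (d + 3) → F) ≤ n := by
      have h2 := finrank_range_le_card (R := F) (fun j : Fin n => v (x j))
      unfold Set.finrank at h2
      rw [htop, finrank_top] at h2
      simpa using h2
    rw [Module.finrank_fintype_fun_eq_card, Fintype.card_fin] at h1
    omega
  · -- the sInf for the specific f
    have hmemT : (d + 3) ∈ {k : ℕ | 0 < k ∧
        cont (f * g') * cont f ^ (k - 1) = cont f ^ k * cont g'} := by
      refine ⟨by omega, ?_⟩
      rw [show d + 3 - 1 = d + 2 by omega]
      exact hDM f
    have hmono : ∀ k l, k ≤ l → (k ∈ {k : ℕ | 0 < k ∧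
        cont (f * g') * cont f ^ (k - 1) = cont f ^ k * cont g'}) → l ∈ {k : ℕ | 0 < k ∧
        cont (f * g') * cont f ^ (k - 1) = cont f ^ k * cont g'} := by
      intro k l hkl
      induction l, hkl using Nat.le_induction with
      | base => exact id
      | succ l hl ih =>
        intro hk
        obtain ⟨hpos, hres⟩ := ih hk
        exact ⟨by omega, hup f l hpos hres⟩
    refine le_antisymm (Nat.sInf_le hmemT) (le_csInf ⟨_, hmemT⟩ ?_)
    intro k hk
    by_contra hlt
    push_neg at hlt
    have h2 := hmono k (d + 2) (by omega) hk
    have h3 := h2.2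
    rw [show d + 2 - 1 = d + 1 by omega] at h3
    exact hkey h3
end
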